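/- The set of extreme points of the binary NBTS polytope (the set of binary two-party behaviours satisfying positivity, normalisation and the NBTS conditions, viewed as a convex subset of ℝ^16) consists of exactly 24 points: the 16 deterministic behaviours p(a,b|x,y) = 1 if a = μ·y ⊕ α and b = ν·x ⊕ β (and 0 otherwise), for α, β, μ, ν ∈ {0,1}, together with the 8 PR-type behaviours p(a,b|x,y) = 1/2 if a ⊕ b = (x ⊕ γ)(y ⊕ δ) ⊕ ε (and 0 otherwise), for γ, δ, ε ∈ {0,1}, where ⊕ denotes addition mod 2. -/

import Mathlib

/-- Constraints a perturbation-block must satisfy given zeros of p. -/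
def Imp (a b c u v w : ℝ) : Prop :=
  (c = 0 → w = 0) ∧ (c = a → w = u) ∧ (c = b → w = v) ∧ (c = a + b - 1 → w = u + v)

/-- Extremeness in parameter form. -/
def Hx (a0 a1 b0 b1 c00 c10 c01 c11 : ℝ) : Prop :=
  ∀ u0 u1 v0 v1 w00 w10 w01 w11 : ℝ,
    Imp a0 b0 c00 u0 v0 w00 → Imp a0 b1 c10 u0 v1 w10 →
    Imp a1 b0 c01 u1 v0 w01 → Imp a1 b1 c11 u1 v1 w11 →
    u0 = 0 ∧ u1 = 0 ∧ v0 = 0 ∧ v1 = 0 ∧ w00 = 0 ∧ w10 = 0 ∧ w01 = 0 ∧ w11 = 0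

lemma Imp.comm {a b c u v w : ℝ} (h : Imp a b c u v w) : Imp b a c v u w := by
  obtain ⟨h1, h2, h3, h4⟩ := h
  exact ⟨h1, h3, h2, fun hc => by rw [h4 (by linarith)]; ring⟩

lemma Hx.transpose {a0 a1 b0 b1 c00 c10 c01 c11 : ℝ}
    (h : Hx a0 a1 b0 b1 c00 c10 c01 c11) : Hx b0 b1 a0 a1 c00 c01 c10 c11 := by
  intro u0 u1 v0 v1 w00 w10 w01 w11 h1 h2 h3 h4
  obtain ⟨g1, g2, g3, g4, g5, g6, g7, g8⟩ := h v0 v1 u0 u1 w00 w01 w10 w11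
    h1.comm h3.comm h2.comm h4.comm
  exact ⟨g3, g4, g1, g2, g5, g7, g6, g8⟩

lemma Hx.swapx {a0 a1 b0 b1 c00 c10 c01 c11 : ℝ}
    (h : Hx a0 a1 b0 b1 c00 c10 c01 c11) : Hx a0 a1 b1 b0 c10 c00 c11 c01 := by
  intro u0 u1 v0 v1 w00 w10 w01 w11 h1 h2 h3 h4
  obtain ⟨g1, g2, g3, g4, g5, g6, g7, g8⟩ := h u0 u1 v1 v0 w10 w00 w11 w01 h2 h1 h4 h3
  exact ⟨g1, g2, g4, g3, g6, g5, g8, g7⟩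

lemma Hx.swapy {a0 a1 b0 b1 c00 c10 c01 c11 : ℝ}
    (h : Hx a0 a1 b0 b1 c00 c10 c01 c11) : Hx a1 a0 b0 b1 c01 c11 c00 c10 := by
  intro u0 u1 v0 v1 w00 w10 w01 w11 h1 h2 h3 h4
  obtain ⟨g1, g2, g3, g4, g5, g6, g7, g8⟩ := h u1 u0 v0 v1 w01 w11 w00 w10 h3 h4 h1 h2
  exact ⟨g2, g1, g3, g4, g7, g8, g5, g6⟩

/-- Each block must have a tight constraint. -/
lemma tight00 {a0 a1 b0 b1 c00 c10 c01 c11 : ℝ}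
    (hx : Hx a0 a1 b0 b1 c00 c10 c01 c11) :
    c00 = 0 ∨ c00 = a0 ∨ c00 = b0 ∨ c00 = a0 + b0 - 1 := by
  by_contra h
  push_neg at h
  obtain ⟨h1, h2, h3, h4⟩ := h
  obtain ⟨-, -, -, -, g, -, -, -⟩ :=
    hx 0 0 0 0 1 0 0 0
      ⟨fun hc => absurd hc h1, fun hc => absurd hc h2, fun hc => absurd hc h3,
        fun hc => absurd hc h4⟩
      ⟨fun _ => rfl, fun _ => rfl, fun _ => rfl, fun _ => by norm_num⟩
      ⟨fun _ => rfl, fun _ => rfl, fun _ => rfl, fun _ => by norm_num⟩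
      ⟨fun _ => rfl, fun _ => rfl, fun _ => rfl, fun _ => by norm_num⟩
  exact one_ne_zero g

/-- If `a0` is interior then one of the two blocks containing it is "coupled". -/
lemma coup_of_interior {a0 a1 b0 b1 c00 c10 c01 c11 : ℝ}
    (hx : Hx a0 a1 b0 b1 c00 c10 c01 c11) (h0 : 0 < a0) (h1 : a0 < 1) :
    ((c00 = 0 ∧ c00 = a0 + b0 - 1) ∨ (c00 = a0 ∧ c00 = b0)) ∨
    ((c10 = 0 ∧ c10 = a0 + b1 - 1) ∨ (c10 = a0 ∧ c10 = b1)) := by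
  by_contra hcon
  push_neg at hcon
  obtain ⟨⟨hA1, hA2⟩, hB1, hB2⟩ := hcon
  have key := hx 1 0 0 0
    (if c00 = a0 ∨ c00 = a0 + b0 - 1 then 1 else 0)
    (if c10 = a0 ∨ c10 = a0 + b1 - 1 then 1 else 0) 0 0
    ?_ ?_ ?_ ?_
  · exact one_ne_zero key.1
  · refine ⟨fun hc => ?_, fun hc => ?_, fun hc => ?_, fun hc => ?_⟩
    · rw [if_neg]; rintro (h | h)
      · linarith
      · exact hA1 hc h
    · rw [if_pos (Or.inl hc)]
    · rw [if_neg]; rintro (h | h)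
      · exact hA2 h hc
      · linarith
    · rw [if_pos (Or.inr hc)]; norm_num
  · refine ⟨fun hc => ?_, fun hc => ?_, fun hc => ?_, fun hc => ?_⟩
    · rw [if_neg]; rintro (h | h)
      · linarith
      · exact hB1 hc h
    · rw [if_pos (Or.inl hc)]
    · rw [if_neg]; rintro (h | h)
      · exact hB2 h hc
      · linarith
    · rw [if_pos (Or.inr hc)]; norm_num
  · exact ⟨fun _ => rfl, fun _ => rfl, fun _ => rfl, fun _ => by norm_num⟩
  · exact ⟨fun _ => rfl, fun _ => rfl, fun _ => rfl, fun _ => by norm_num⟩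

/-- Block constraints. -/
def Blk (a b c : ℝ) : Prop := 0 ≤ c ∧ c ≤ a ∧ c ≤ b ∧ a + b - 1 ≤ c

/-- If `a0` and `b0` are interior, block 00 is coupled. -/
lemma coup00_of_interior {a0 a1 b0 b1 c00 c10 c01 c11 : ℝ}
    (hx : Hx a0 a1 b0 b1 c00 c10 c01 c11)
    (B00 : Blk a0 b0 c00) (B10 : Blk a0 b1 c10) (B01 : Blk a1 b0 c01) (B11 : Blk a1 b1 c11)
    (ha0 : 0 < a0) (ha0' : a0 < 1) (hb0 : 0 < b0) (hb0' : b0 < 1) :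
    (c00 = 0 ∧ c00 = a0 + b0 - 1) ∨ (c00 = a0 ∧ c00 = b0) := by
  classical
  by_contra hC
  push_neg at hC
  obtain ⟨hC1, hC2⟩ := hC
  set v1 : ℝ := if c10 = 0 then (if c10 = a0 + b1 - 1 then -1 else 0)
      else (if c10 = a0 then (if c10 = b1 then 1 else 0) else 0) with hv1e
  set u1 : ℝ := if c11 = 0 then (if c11 = a1 + b1 - 1 then -v1 else 0)
      else (if c11 = a1 then (if c11 = b1 then v1 else 0) else 0) with hu1e
  set v0 : ℝ := if c01 = 0 then (if c01 = a1 + b0 - 1 then -u1 else 0)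
      else (if c01 = a1 then (if c01 = b0 then u1 else 0) else 0) with hv0e
  have hv1K : v1 ≠ 0 → (c10 = 0 ∧ c10 = a0 + b1 - 1 ∧ v1 = -1) ∨
      (c10 = a0 ∧ c10 = b1 ∧ v1 = 1) := by
    intro h
    by_cases h1 : c10 = 0
    · by_cases h2 : c10 = a0 + b1 - 1
      · exact Or.inl ⟨h1, h2, by rw [hv1e, if_pos h1, if_pos h2]⟩
      · exact absurd (by rw [hv1e, if_pos h1, if_neg h2]) h
    · by_cases h2 : c10 = a0
      · by_cases h3 : c10 = b1
        · exact Or.inr ⟨h2, h3, by rw [hv1e, if_neg h1, if_pos h2, if_pos h3]⟩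
        · exact absurd (by rw [hv1e, if_neg h1, if_pos h2, if_neg h3]) h
      · exact absurd (by rw [hv1e, if_neg h1, if_neg h2]) h
  have hb1int : v1 ≠ 0 → 0 < b1 ∧ b1 < 1 := by
    intro h
    rcases hv1K h with ⟨e1, e2, -⟩ | ⟨e1, e2, -⟩ <;> constructor <;> linarith
  have hu1K : u1 ≠ 0 → (c11 = 0 ∧ c11 = a1 + b1 - 1 ∧ u1 = -v1) ∨
      (c11 = a1 ∧ c11 = b1 ∧ u1 = v1) := by
    intro h
    by_cases h1 : c11 = 0
    · by_cases h2 : c11 = a1 + b1 - 1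
      · exact Or.inl ⟨h1, h2, by rw [hu1e, if_pos h1, if_pos h2]⟩
      · exact absurd (by rw [hu1e, if_pos h1, if_neg h2]) h
    · by_cases h2 : c11 = a1
      · by_cases h3 : c11 = b1
        · exact Or.inr ⟨h2, h3, by rw [hu1e, if_neg h1, if_pos h2, if_pos h3]⟩
        · exact absurd (by rw [hu1e, if_neg h1, if_pos h2, if_neg h3]) h
      · exact absurd (by rw [hu1e, if_neg h1, if_neg h2]) h
  have hu1v1 : u1 ≠ 0 → v1 ≠ 0 := by
    intro h hv
    rcases hu1K h with ⟨-, -, e⟩ | ⟨-, -, e⟩ <;> rw [e, hv] at h <;> simp at h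
  have ha1int : u1 ≠ 0 → 0 < a1 ∧ a1 < 1 := by
    intro h
    have hb := hb1int (hu1v1 h)
    rcases hu1K h with ⟨e1, e2, -⟩ | ⟨e1, e2, -⟩ <;> constructor <;> linarith
  have key := hx 1 u1 v0 v1
    (if c00 = 0 then 0 else if c00 = a0 then 1 else if c00 = b0 then v0 else 1 + v0)
    (if c10 = 0 then 0 else if c10 = a0 then 1 else if c10 = b1 then v1 else 1 + v1)
    (if c01 = 0 then 0 else if c01 = a1 then u1 else if c01 = b0 then v0 else u1 + v0)
    (if c11 = 0 then 0 else if c11 = a1 then u1 else if c11 = b1 then v1 else u1 + v1)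
    ?_ ?_ ?_ ?_
  · exact one_ne_zero key.1
  -- block (0,0)
  · refine ⟨fun hc => ?_, fun hc => ?_, fun hc => ?_, fun hc => ?_⟩
    · rw [if_pos hc]
    · rw [if_neg (by linarith), if_pos hc]
    · rw [if_neg (by linarith)]
      by_cases h2 : c00 = a0
      · exact absurd hc (hC2 h2)
      · rw [if_neg h2, if_pos hc]
    · by_cases h1 : c00 = 0
      · exact absurd hc (hC1 h1)
      rw [if_neg h1]
      by_cases h2 : c00 = a0
      · exfalso; linarith
      rw [if_neg h2]
      by_cases h3 : c00 = b0
      · exfalso; linarith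
      rw [if_neg h3]
  -- block (1,0)
  · refine ⟨fun hc => ?_, fun hc => ?_, fun hc => ?_, fun hc => ?_⟩
    · rw [if_pos hc]
    · rw [if_neg (by linarith), if_pos hc]
    · by_cases h1 : c10 = 0
      · rw [if_pos h1]
        rcases eq_or_ne v1 0 with h | h
        · rw [h]
        · have := hb1int h; exfalso; linarith
      rw [if_neg h1]
      by_cases h2 : c10 = a0
      · rw [if_pos h2, hv1e, if_neg h1, if_pos h2, if_pos hc]
      · rw [if_neg h2, if_pos hc]
    · by_cases h1 : c10 = 0
      · rw [if_pos h1, hv1e, if_pos h1, if_pos hc]; norm_num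
      rw [if_neg h1]
      by_cases h2 : c10 = a0
      · rw [if_pos h2]
        rcases eq_or_ne v1 0 with h | h
        · rw [h]; norm_num
        · have := hb1int h; exfalso; linarith
      rw [if_neg h2]
      by_cases h3 : c10 = b1
      · exfalso; linarith
      · rw [if_neg h3]
  -- block (0,1)
  · refine ⟨fun hc => ?_, fun hc => ?_, fun hc => ?_, fun hc => ?_⟩
    · rw [if_pos hc]
    · by_cases h1 : c01 = 0
      · rw [if_pos h1]
        rcases eq_or_ne u1 0 with h | h
        · rw [h]
        · have := ha1int h; exfalso; linarith
      · rw [if_neg h1, if_pos hc]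
    · by_cases h1 : c01 = 0
      · exfalso; linarith
      rw [if_neg h1]
      by_cases h2 : c01 = a1
      · rw [if_pos h2, hv0e, if_neg h1, if_pos h2, if_pos hc]
      · rw [if_neg h2, if_pos hc]
    · by_cases h1 : c01 = 0
      · rw [if_pos h1, hv0e, if_pos h1, if_pos hc]; ring
      rw [if_neg h1]
      by_cases h2 : c01 = a1
      · exfalso; linarith
      rw [if_neg h2]
      by_cases h3 : c01 = b0
      · rw [if_pos h3]
        rcases eq_or_ne u1 0 with h | h
        · rw [h]; ring
        · have := ha1int h; exfalso; linarith
      · rw [if_neg h3]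
  -- block (1,1)
  · refine ⟨fun hc => ?_, fun hc => ?_, fun hc => ?_, fun hc => ?_⟩
    · rw [if_pos hc]
    · by_cases h1 : c11 = 0
      · rw [if_pos h1]
        rcases eq_or_ne u1 0 with h | h
        · rw [h]
        · have := ha1int h; exfalso; linarith
      · rw [if_neg h1, if_pos hc]
    · by_cases h1 : c11 = 0
      · rw [if_pos h1]
        rcases eq_or_ne v1 0 with h | h
        · rw [h]
        · have := hb1int h; exfalso; linarith
      rw [if_neg h1]
      by_cases h2 : c11 = a1
      · rw [if_pos h2, hu1e, if_neg h1, if_pos h2, if_pos hc]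
      · rw [if_neg h2, if_pos hc]
    · by_cases h1 : c11 = 0
      · rw [if_pos h1, hu1e, if_pos h1, if_pos hc]; ring
      rw [if_neg h1]
      by_cases h2 : c11 = a1
      · rw [if_pos h2]
        rcases eq_or_ne v1 0 with h | h
        · rw [h]; ring
        · have := hb1int h; exfalso; linarith
      rw [if_neg h2]
      by_cases h3 : c11 = b1
      · rw [if_pos h3]
        rcases eq_or_ne u1 0 with h | h
        · rw [h]; ring
        · have := ha1int h; exfalso; linarith
      · rw [if_neg h3]

/-- If `a0` and `b0` are interior, so is `a1`. -/
lemma a1_interior {a0 a1 b0 b1 c00 c10 c01 c11 : ℝ}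
    (hx : Hx a0 a1 b0 b1 c00 c10 c01 c11)
    (B00 : Blk a0 b0 c00) (B10 : Blk a0 b1 c10) (B01 : Blk a1 b0 c01) (B11 : Blk a1 b1 c11)
    (ha0 : 0 < a0) (ha0' : a0 < 1) (hb0 : 0 < b0) (hb0' : b0 < 1) :
    0 < a1 ∧ a1 < 1 := by
  classical
  have hcoup := coup00_of_interior hx B00 B10 B01 B11 ha0 ha0' hb0 hb0'
  obtain ⟨hc01_0, hc01_a, hc01_b, hc01_s⟩ := B01
  obtain ⟨hc11_0, hc11_a, hc11_b, hc11_s⟩ := B11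
  obtain ⟨hc10_0, hc10_a, hc10_b, hc10_s⟩ := B10
  by_contra hbd
  push_neg at hbd
  have ha1bd : a1 = 0 ∨ a1 = 1 := by
    rcases lt_or_ge 0 a1 with h | h
    · right; linarith [hbd h]
    · left; linarith
  set v1 : ℝ := if c10 = 0 then (if c10 = a0 + b1 - 1 then -1 else 0)
      else (if c10 = a0 then (if c10 = b1 then 1 else 0) else 0) with hv1e
  set v0 : ℝ := if c00 = 0 then (-1 : ℝ) else 1 with hv0e
  have hv1K : v1 ≠ 0 → (c10 = 0 ∧ c10 = a0 + b1 - 1 ∧ v1 = -1) ∨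
      (c10 = a0 ∧ c10 = b1 ∧ v1 = 1) := by
    intro h
    by_cases h1 : c10 = 0
    · by_cases h2 : c10 = a0 + b1 - 1
      · exact Or.inl ⟨h1, h2, by rw [hv1e, if_pos h1, if_pos h2]⟩
      · exact absurd (by rw [hv1e, if_pos h1, if_neg h2]) h
    · by_cases h2 : c10 = a0
      · by_cases h3 : c10 = b1
        · exact Or.inr ⟨h2, h3, by rw [hv1e, if_neg h1, if_pos h2, if_pos h3]⟩
        · exact absurd (by rw [hv1e, if_neg h1, if_pos h2, if_neg h3]) h
      · exact absurd (by rw [hv1e, if_neg h1, if_neg h2]) h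
  have hb1int : v1 ≠ 0 → 0 < b1 ∧ b1 < 1 := by
    intro h
    rcases hv1K h with ⟨e1, e2, -⟩ | ⟨e1, e2, -⟩ <;> constructor <;> linarith
  have key := hx 1 0 v0 v1
    (if c00 = 0 then 0 else 1)
    (if c10 = 0 then 0 else if c10 = a0 then 1 else if c10 = b1 then v1 else 1 + v1)
    (if c01 = 0 then 0 else v0)
    (if c11 = 0 then 0 else v1)
    ?_ ?_ ?_ ?_
  · exact one_ne_zero key.1
  -- block (0,0)
  · refine ⟨fun hc => ?_, fun hc => ?_, fun hc => ?_, fun hc => ?_⟩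
    · rw [if_pos hc]
    · rw [if_neg (by linarith)]
    · rw [if_neg (by linarith), hv0e, if_neg (by linarith)]
    · by_cases h1 : c00 = 0
      · rw [if_pos h1, hv0e, if_pos h1]; norm_num
      · rcases hcoup with ⟨e1, -⟩ | ⟨e1, e2⟩
        · exact absurd e1 h1
        · exfalso; linarith
  -- block (1,0)
  · refine ⟨fun hc => ?_, fun hc => ?_, fun hc => ?_, fun hc => ?_⟩
    · rw [if_pos hc]
    · rw [if_neg (by linarith), if_pos hc]
    · by_cases h1 : c10 = 0
      · rw [if_pos h1]
        rcases eq_or_ne v1 0 with h | h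
        · rw [h]
        · have := hb1int h; exfalso; linarith
      rw [if_neg h1]
      by_cases h2 : c10 = a0
      · rw [if_pos h2, hv1e, if_neg h1, if_pos h2, if_pos hc]
      · rw [if_neg h2, if_pos hc]
    · by_cases h1 : c10 = 0
      · rw [if_pos h1, hv1e, if_pos h1, if_pos hc]; norm_num
      rw [if_neg h1]
      by_cases h2 : c10 = a0
      · rw [if_pos h2]
        rcases eq_or_ne v1 0 with h | h
        · rw [h]; norm_num
        · have := hb1int h; exfalso; linarith
      rw [if_neg h2]
      by_cases h3 : c10 = b1
      · exfalso; linarith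
      · rw [if_neg h3]
  -- block (0,1)
  · refine ⟨fun hc => ?_, fun hc => ?_, fun hc => ?_, fun hc => ?_⟩
    · rw [if_pos hc]
    · rcases ha1bd with h | h
      · rw [if_pos (by linarith : c01 = 0)]
      · exfalso; linarith
    · rw [if_neg (by linarith)]
    · rcases ha1bd with h | h
      · exfalso; linarith
      · rw [if_neg (by linarith)]; ring
  -- block (1,1)
  · refine ⟨fun hc => ?_, fun hc => ?_, fun hc => ?_, fun hc => ?_⟩
    · rw [if_pos hc]
    · rcases ha1bd with h | h
      · rw [if_pos (by linarith : c11 = 0)]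
      · rw [if_neg (by linarith)]
        rcases eq_or_ne v1 0 with hv | hv
        · rw [hv]
        · have := hb1int hv; exfalso; linarith
    · by_cases h1 : c11 = 0
      · rw [if_pos h1]
        rcases eq_or_ne v1 0 with h | h
        · rw [h]
        · have := hb1int h; exfalso; linarith
      · rw [if_neg h1]
    · rcases ha1bd with h | h
      · have h1 : c11 = 0 := by linarith
        rw [if_pos h1]
        rcases eq_or_ne v1 0 with hv | hv
        · rw [hv]; norm_num
        · have := hb1int hv; exfalso; linarith
      · have hcb : c11 = b1 := by linarith
        by_cases h1 : c11 = 0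
        · rw [if_pos h1]
          rcases eq_or_ne v1 0 with hv | hv
          · rw [hv]; norm_num
          · have := hb1int hv; exfalso; linarith
        · rw [if_neg h1]; ring

/-- An even sign pattern of couplings contradicts extremeness. -/
lemma even_contra {a0 a1 b0 b1 c00 c10 c01 c11 : ℝ}
    (hx : Hx a0 a1 b0 b1 c00 c10 c01 c11)
    (ia0 : 0 < a0) (ia0' : a0 < 1) (ia1 : 0 < a1) (ia1' : a1 < 1)
    (ib0 : 0 < b0) (ib0' : b0 < 1) (ib1 : 0 < b1) (ib1' : b1 < 1)
    {e00 e10 e01 e11 : ℝ}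
    (h00 : (e00 = -1 ∧ c00 = 0 ∧ c00 = a0 + b0 - 1) ∨ (e00 = 1 ∧ c00 = a0 ∧ c00 = b0))
    (h10 : (e10 = -1 ∧ c10 = 0 ∧ c10 = a0 + b1 - 1) ∨ (e10 = 1 ∧ c10 = a0 ∧ c10 = b1))
    (h01 : (e01 = -1 ∧ c01 = 0 ∧ c01 = a1 + b0 - 1) ∨ (e01 = 1 ∧ c01 = a1 ∧ c01 = b0))
    (h11 : (e11 = -1 ∧ c11 = 0 ∧ c11 = a1 + b1 - 1) ∨ (e11 = 1 ∧ c11 = a1 ∧ c11 = b1))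
    (epar : e00 * e10 * e01 * e11 = 1) : False := by
  have key := hx 1 (e01 * e00) e00 (e11 * (e01 * e00))
    ((1 + e00) / 2) ((1 + e10) / 2) ((1 + e01) / 2 * (e01 * e00))
    ((1 + e11) / 2 * (e01 * e00)) ?_ ?_ ?_ ?_
  · exact one_ne_zero key.1
  -- block (0,0)
  · refine ⟨fun hc => ?_, fun hc => ?_, fun hc => ?_, fun hc => ?_⟩ <;>
      rcases h00 with ⟨he, hz, hs⟩ | ⟨he, hz, hs⟩
    · rw [he]; norm_num
    · exfalso; linarith
    · exfalso; linarith
    · rw [he]; norm_num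
    · exfalso; linarith
    · rw [he]; norm_num
    · rw [he]; norm_num
    · exfalso; linarith
  -- block (1,0)
  · refine ⟨fun hc => ?_, fun hc => ?_, fun hc => ?_, fun hc => ?_⟩ <;>
      rcases h10 with ⟨he, hz, hs⟩ | ⟨he, hz, hs⟩
    · rw [he]; norm_num
    · exfalso; linarith
    · exfalso; linarith
    · rw [he]; norm_num
    · exfalso; linarith
    · rw [he]
      first
      | linear_combination -epar + (e00 * e01 * e11) * he
      | linear_combination epar - (e00 * e01 * e11) * he
    · rw [he]
      first
      | linear_combination -epar + (e00 * e01 * e11) * he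
      | linear_combination epar - (e00 * e01 * e11) * he
    · exfalso; linarith
  -- block (0,1)
  · refine ⟨fun hc => ?_, fun hc => ?_, fun hc => ?_, fun hc => ?_⟩ <;>
      rcases h01 with ⟨he, hz, hs⟩ | ⟨he, hz, hs⟩
    · rw [he]; norm_num
    · exfalso; linarith
    · exfalso; linarith
    · rw [he]; norm_num
    · exfalso; linarith
    · rw [he]; ring
    · rw [he]; ring
    · exfalso; linarith
  -- block (1,1)
  · refine ⟨fun hc => ?_, fun hc => ?_, fun hc => ?_, fun hc => ?_⟩ <;>
      rcases h11 with ⟨he, hz, hs⟩ | ⟨he, hz, hs⟩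
    · rw [he]; norm_num
    · exfalso; linarith
    · exfalso; linarith
    · rw [he]; norm_num
    · exfalso; linarith
    · rw [he]; ring
    · rw [he]; ring
    · exfalso; linarith

lemma Blk.comm {a b c : ℝ} (h : Blk a b c) : Blk b a c :=
  ⟨h.1, h.2.2.1, h.2.1, by have := h.2.2.2; linarith⟩

lemma Blk.bounds {a b c : ℝ} (h : Blk a b c) : 0 ≤ a ∧ a ≤ 1 ∧ 0 ≤ b ∧ b ≤ 1 := by
  obtain ⟨h1, h2, h3, h4⟩ := h
  exact ⟨by linarith, by linarith, by linarith, by linarith⟩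

lemma det_c {a b c : ℝ} (h : Blk a b c) (ha : a = 0 ∨ a = 1) (hb : b = 0 ∨ b = 1) :
    c = a * b := by
  obtain ⟨h1, h2, h3, h4⟩ := h
  rcases ha with ha | ha <;> rcases hb with hb | hb <;> rw [ha, hb] <;> norm_num <;> linarith

/-- If one parameter is interior, all are. -/
lemma allInterior {a0 a1 b0 b1 c00 c10 c01 c11 : ℝ}
    (hx : Hx a0 a1 b0 b1 c00 c10 c01 c11)
    (B00 : Blk a0 b0 c00) (B10 : Blk a0 b1 c10) (B01 : Blk a1 b0 c01) (B11 : Blk a1 b1 c11)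
    (ha0 : 0 < a0) (ha0' : a0 < 1) :
    (0 < a1 ∧ a1 < 1) ∧ (0 < b0 ∧ b0 < 1) ∧ (0 < b1 ∧ b1 < 1) := by
  rcases coup_of_interior hx ha0 ha0' with hcp | hcp
  · have hb0 : 0 < b0 ∧ b0 < 1 := by
      rcases hcp with ⟨e1, e2⟩ | ⟨e1, e2⟩ <;> constructor <;> linarith
    have ha1 := a1_interior hx B00 B10 B01 B11 ha0 ha0' hb0.1 hb0.2
    have hb1 := a1_interior hx.transpose B00.comm B01.comm B10.comm B11.comm
      hb0.1 hb0.2 ha0 ha0'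
    exact ⟨ha1, hb0, hb1⟩
  · have hb1 : 0 < b1 ∧ b1 < 1 := by
      rcases hcp with ⟨e1, e2⟩ | ⟨e1, e2⟩ <;> constructor <;> linarith
    have ha1 := a1_interior hx.swapx B10 B00 B11 B01 ha0 ha0' hb1.1 hb1.2
    have hb0 := a1_interior hx.swapx.transpose B10.comm B11.comm B00.comm B01.comm
      hb1.1 hb1.2 ha0 ha0'
    exact ⟨ha1, hb0, hb1⟩

/-- Main parameter-space classification. -/
lemma paramClassify {a0 a1 b0 b1 c00 c10 c01 c11 : ℝ}
    (hx : Hx a0 a1 b0 b1 c00 c10 c01 c11)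
    (B00 : Blk a0 b0 c00) (B10 : Blk a0 b1 c10) (B01 : Blk a1 b0 c01) (B11 : Blk a1 b1 c11) :
    ((a0 = 0 ∨ a0 = 1) ∧ (a1 = 0 ∨ a1 = 1) ∧ (b0 = 0 ∨ b0 = 1) ∧ (b1 = 0 ∨ b1 = 1) ∧
      c00 = a0 * b0 ∧ c10 = a0 * b1 ∧ c01 = a1 * b0 ∧ c11 = a1 * b1) ∨
    (a0 = 1/2 ∧ a1 = 1/2 ∧ b0 = 1/2 ∧ b1 = 1/2 ∧
      (c00 = 0 ∨ c00 = 1/2) ∧ (c10 = 0 ∨ c10 = 1/2) ∧ (c01 = 0 ∨ c01 = 1/2) ∧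
      (c11 = 0 ∨ c11 = 1/2) ∧
      (c00 + c10 + c01 + c11 = 1/2 ∨ c00 + c10 + c01 + c11 = 3/2)) := by
  obtain ⟨ba0, ba0', bb0, bb0'⟩ := B00.bounds
  obtain ⟨-, -, bb1, bb1'⟩ := B10.bounds
  obtain ⟨ba1, ba1', -, -⟩ := B01.bounds
  have hint : (0 < a0 ∧ a0 < 1) ∨ (0 < a1 ∧ a1 < 1) ∨ (0 < b0 ∧ b0 < 1) ∨
      (0 < b1 ∧ b1 < 1) ∨
      ((a0 = 0 ∨ a0 = 1) ∧ (a1 = 0 ∨ a1 = 1) ∧ (b0 = 0 ∨ b0 = 1) ∧ (b1 = 0 ∨ b1 = 1)) := by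
    by_cases h1 : a0 = 0 ∨ a0 = 1
    · by_cases h2 : a1 = 0 ∨ a1 = 1
      · by_cases h3 : b0 = 0 ∨ b0 = 1
        · by_cases h4 : b1 = 0 ∨ b1 = 1
          · exact Or.inr (Or.inr (Or.inr (Or.inr ⟨h1, h2, h3, h4⟩)))
          · push_neg at h4
            exact Or.inr (Or.inr (Or.inr (Or.inl ⟨lt_of_le_of_ne bb1 (Ne.symm h4.1),
              lt_of_le_of_ne bb1' h4.2⟩)))
        · push_neg at h3
          exact Or.inr (Or.inr (Or.inl ⟨lt_of_le_of_ne bb0 (Ne.symm h3.1),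
            lt_of_le_of_ne bb0' h3.2⟩))
      · push_neg at h2
        exact Or.inr (Or.inl ⟨lt_of_le_of_ne ba1 (Ne.symm h2.1),
          lt_of_le_of_ne ba1' h2.2⟩)
    · push_neg at h1
      exact Or.inl ⟨lt_of_le_of_ne ba0 (Ne.symm h1.1), lt_of_le_of_ne ba0' h1.2⟩
  have main : 0 < a0 → a0 < 1 → 0 < a1 → a1 < 1 → 0 < b0 → b0 < 1 → 0 < b1 → b1 < 1 →
      (((a0 = 0 ∨ a0 = 1) ∧ (a1 = 0 ∨ a1 = 1) ∧ (b0 = 0 ∨ b0 = 1) ∧ (b1 = 0 ∨ b1 = 1) ∧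
        c00 = a0 * b0 ∧ c10 = a0 * b1 ∧ c01 = a1 * b0 ∧ c11 = a1 * b1) ∨
      (a0 = 1/2 ∧ a1 = 1/2 ∧ b0 = 1/2 ∧ b1 = 1/2 ∧
        (c00 = 0 ∨ c00 = 1/2) ∧ (c10 = 0 ∨ c10 = 1/2) ∧ (c01 = 0 ∨ c01 = 1/2) ∧
        (c11 = 0 ∨ c11 = 1/2) ∧
        (c00 + c10 + c01 + c11 = 1/2 ∨ c00 + c10 + c01 + c11 = 3/2))) := by
    intro ia0 ia0' ia1 ia1' ib0 ib0' ib1 ib1'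
    have C00 := coup00_of_interior hx B00 B10 B01 B11 ia0 ia0' ib0 ib0'
    have C10 := coup00_of_interior hx.swapx B10 B00 B11 B01 ia0 ia0' ib1 ib1'
    have C01 := coup00_of_interior hx.swapy B01 B11 B00 B10 ia1 ia1' ib0 ib0'
    have C11 := coup00_of_interior hx.swapy.swapx B11 B01 B10 B00 ia1 ia1' ib1 ib1'
    clear hint
    rcases C00 with ⟨z1, s1⟩ | ⟨z1, s1⟩ <;> rcases C10 with ⟨z2, s2⟩ | ⟨z2, s2⟩ <;>
      rcases C01 with ⟨z3, s3⟩ | ⟨z3, s3⟩ <;> rcases C11 with ⟨z4, s4⟩ | ⟨z4, s4⟩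
    · exact (even_contra hx ia0 ia0' ia1 ia1' ib0 ib0' ib1 ib1' (Or.inl ⟨rfl, z1, s1⟩) (Or.inl ⟨rfl, z2, s2⟩) (Or.inl ⟨rfl, z3, s3⟩) (Or.inl ⟨rfl, z4, s4⟩) (by norm_num)).elim
    · exact Or.inr ⟨by linarith, by linarith, by linarith, by linarith, Or.inl (by linarith), Or.inl (by linarith), Or.inl (by linarith), Or.inr (by linarith), Or.inl (by linarith)⟩
    · exact Or.inr ⟨by linarith, by linarith, by linarith, by linarith, Or.inl (by linarith), Or.inl (by linarith), Or.inr (by linarith), Or.inl (by linarith), Or.inl (by linarith)⟩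
    · exact (even_contra hx ia0 ia0' ia1 ia1' ib0 ib0' ib1 ib1' (Or.inl ⟨rfl, z1, s1⟩) (Or.inl ⟨rfl, z2, s2⟩) (Or.inr ⟨rfl, z3, s3⟩) (Or.inr ⟨rfl, z4, s4⟩) (by norm_num)).elim
    · exact Or.inr ⟨by linarith, by linarith, by linarith, by linarith, Or.inl (by linarith), Or.inr (by linarith), Or.inl (by linarith), Or.inl (by linarith), Or.inl (by linarith)⟩
    · exact (even_contra hx ia0 ia0' ia1 ia1' ib0 ib0' ib1 ib1' (Or.inl ⟨rfl, z1, s1⟩) (Or.inr ⟨rfl, z2, s2⟩) (Or.inl ⟨rfl, z3, s3⟩) (Or.inr ⟨rfl, z4, s4⟩) (by norm_num)).elim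
    · exact (even_contra hx ia0 ia0' ia1 ia1' ib0 ib0' ib1 ib1' (Or.inl ⟨rfl, z1, s1⟩) (Or.inr ⟨rfl, z2, s2⟩) (Or.inr ⟨rfl, z3, s3⟩) (Or.inl ⟨rfl, z4, s4⟩) (by norm_num)).elim
    · exact Or.inr ⟨by linarith, by linarith, by linarith, by linarith, Or.inl (by linarith), Or.inr (by linarith), Or.inr (by linarith), Or.inr (by linarith), Or.inr (by linarith)⟩
    · exact Or.inr ⟨by linarith, by linarith, by linarith, by linarith, Or.inr (by linarith), Or.inl (by linarith), Or.inl (by linarith), Or.inl (by linarith), Or.inl (by linarith)⟩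
    · exact (even_contra hx ia0 ia0' ia1 ia1' ib0 ib0' ib1 ib1' (Or.inr ⟨rfl, z1, s1⟩) (Or.inl ⟨rfl, z2, s2⟩) (Or.inl ⟨rfl, z3, s3⟩) (Or.inr ⟨rfl, z4, s4⟩) (by norm_num)).elim
    · exact (even_contra hx ia0 ia0' ia1 ia1' ib0 ib0' ib1 ib1' (Or.inr ⟨rfl, z1, s1⟩) (Or.inl ⟨rfl, z2, s2⟩) (Or.inr ⟨rfl, z3, s3⟩) (Or.inl ⟨rfl, z4, s4⟩) (by norm_num)).elim
    · exact Or.inr ⟨by linarith, by linarith, by linarith, by linarith, Or.inr (by linarith), Or.inl (by linarith), Or.inr (by linarith), Or.inr (by linarith), Or.inr (by linarith)⟩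
    · exact (even_contra hx ia0 ia0' ia1 ia1' ib0 ib0' ib1 ib1' (Or.inr ⟨rfl, z1, s1⟩) (Or.inr ⟨rfl, z2, s2⟩) (Or.inl ⟨rfl, z3, s3⟩) (Or.inl ⟨rfl, z4, s4⟩) (by norm_num)).elim
    · exact Or.inr ⟨by linarith, by linarith, by linarith, by linarith, Or.inr (by linarith), Or.inr (by linarith), Or.inl (by linarith), Or.inr (by linarith), Or.inr (by linarith)⟩
    · exact Or.inr ⟨by linarith, by linarith, by linarith, by linarith, Or.inr (by linarith), Or.inr (by linarith), Or.inr (by linarith), Or.inl (by linarith), Or.inr (by linarith)⟩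
    · exact (even_contra hx ia0 ia0' ia1 ia1' ib0 ib0' ib1 ib1' (Or.inr ⟨rfl, z1, s1⟩) (Or.inr ⟨rfl, z2, s2⟩) (Or.inr ⟨rfl, z3, s3⟩) (Or.inr ⟨rfl, z4, s4⟩) (by norm_num)).elim
  rcases hint with h | h | h | h | h
  · obtain ⟨hh1, hh2, hh3⟩ := allInterior hx B00 B10 B01 B11 h.1 h.2
    exact main h.1 h.2 hh1.1 hh1.2 hh2.1 hh2.2 hh3.1 hh3.2
  · obtain ⟨hh1, hh2, hh3⟩ := allInterior hx.swapy B01 B11 B00 B10 h.1 h.2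
    exact main hh1.1 hh1.2 h.1 h.2 hh2.1 hh2.2 hh3.1 hh3.2
  · obtain ⟨hh1, hh2, hh3⟩ := allInterior hx.transpose B00.comm B01.comm B10.comm B11.comm h.1 h.2
    exact main hh2.1 hh2.2 hh3.1 hh3.2 h.1 h.2 hh1.1 hh1.2
  · obtain ⟨hh1, hh2, hh3⟩ := allInterior hx.swapx.transpose B10.comm B11.comm B00.comm B01.comm h.1 h.2
    exact main hh2.1 hh2.2 hh3.1 hh3.2 hh1.1 hh1.2 h.1 h.2
  · exact Or.inl ⟨h.1, h.2.1, h.2.2.1, h.2.2.2, det_c B00 h.1 h.2.2.1,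
      det_c B10 h.1 h.2.2.2, det_c B01 h.2.1 h.2.2.1, det_c B11 h.2.1 h.2.2.2⟩

abbrev Beh := Fin 2 → Fin 2 → Fin 2 → Fin 2 → ℝ

def Sset : Set Beh := {p |
    (∀ a b x y, 0 ≤ p a b x y) ∧
    (∀ x y, ∑ a, ∑ b, p a b x y = 1) ∧
    (∀ a x x' y, ∑ b, p a b x y = ∑ b, p a b x' y) ∧
    (∀ b x y y', ∑ a, p a b x y = ∑ a, p a b x y')}

lemma fin2 (i : Fin 2) : i = 0 ∨ i = 1 := by omega

lemma mem_Sset_iff {p : Beh} : p ∈ Sset ↔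
    (∀ a b x y, 0 ≤ p a b x y) ∧
    (∀ x y, p 0 0 x y + p 0 1 x y + p 1 0 x y + p 1 1 x y = 1) ∧
    (∀ x x' y, p 0 0 x y + p 0 1 x y = p 0 0 x' y + p 0 1 x' y) ∧
    (∀ x x' y, p 1 0 x y + p 1 1 x y = p 1 0 x' y + p 1 1 x' y) ∧
    (∀ x y y', p 0 0 x y + p 1 0 x y = p 0 0 x y' + p 1 0 x y') ∧
    (∀ x y y', p 0 1 x y + p 1 1 x y = p 0 1 x y' + p 1 1 x y') := by
  constructor
  · rintro ⟨h1, h2, h3, h4⟩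
    refine ⟨h1, fun x y => ?_, fun x x' y => ?_, fun x x' y => ?_,
      fun x y y' => ?_, fun x y y' => ?_⟩
    · have := h2 x y; simp [Fin.sum_univ_two] at this; linarith
    · have := h3 0 x x' y; simpa [Fin.sum_univ_two] using this
    · have := h3 1 x x' y; simpa [Fin.sum_univ_two] using this
    · have := h4 0 x y y'; simpa [Fin.sum_univ_two] using this
    · have := h4 1 x y y'; simpa [Fin.sum_univ_two] using this
  · rintro ⟨h1, h2, h3, h3', h4, h4'⟩
    refine ⟨h1, fun x y => ?_, fun a x x' y => ?_, fun b x y y' => ?_⟩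
    · simp [Fin.sum_univ_two]; have := h2 x y; linarith
    · rcases fin2 a with rfl | rfl <;> simp [Fin.sum_univ_two]
      · have := h3 x x' y; linarith
      · have := h3' x x' y; linarith
    · rcases fin2 b with rfl | rfl <;> simp [Fin.sum_univ_two]
      · have := h4 x y y'; linarith
      · have := h4' x y y'; linarith


lemma hx_of_extreme {p : Beh} (hp : p ∈ Sset.extremePoints ℝ) :
    Hx (p 0 0 0 0 + p 0 1 0 0) (p 0 0 0 1 + p 0 1 0 1)
       (p 0 0 0 0 + p 1 0 0 0) (p 0 0 1 0 + p 1 0 1 0)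
       (p 0 0 0 0) (p 0 0 1 0) (p 0 0 0 1) (p 0 0 1 1) := by
  classical
  obtain ⟨hpS, hext⟩ := mem_extremePoints.mp hp
  obtain ⟨hpos, hn, hA0, hA1, hB0, hB1⟩ := mem_Sset_iff.mp hpS
  intro u0 u1 v0 v1 w00 w10 w01 w11 I00 I10 I01 I11
  set U : Fin 2 → ℝ := fun y => if y = 0 then u0 else u1 with hU
  set V : Fin 2 → ℝ := fun x => if x = 0 then v0 else v1 with hV
  set W : Fin 2 → Fin 2 → ℝ := fun x y =>
    if x = 0 then (if y = 0 then w00 else w01) else (if y = 0 then w10 else w11) with hW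
  set e : Beh := fun a b x y => if a = 0 then (if b = 0 then W x y else U y - W x y)
    else (if b = 0 then V x - W x y else W x y - U y - V x) with he
  have e00 : ∀ x y, e 0 0 x y = W x y := fun x y => by simp [he]
  have e01 : ∀ x y, e 0 1 x y = U y - W x y := fun x y => by simp [he]
  have e10 : ∀ x y, e 1 0 x y = V x - W x y := fun x y => by simp [he]
  have e11 : ∀ x y, e 1 1 x y = W x y - U y - V x := fun x y => by simp [he]
  have hWv : W 0 0 = w00 ∧ W 1 0 = w10 ∧ W 0 1 = w01 ∧ W 1 1 = w11 := by
    refine ⟨?_, ?_, ?_, ?_⟩ <;> simp [hW]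
  have hUv : U 0 = u0 ∧ U 1 = u1 := by constructor <;> simp [hU]
  have hVv : V 0 = v0 ∧ V 1 = v1 := by constructor <;> simp [hV]
  obtain ⟨hW00, hW10, hW01, hW11⟩ := hWv
  obtain ⟨hU0, hU1⟩ := hUv
  obtain ⟨hV0, hV1⟩ := hVv
  have q01 : ∀ x y, p 0 1 x y = (p 0 0 0 y + p 0 1 0 y) - p 0 0 x y := by
    intro x y; have := hA0 x 0 y; linarith
  have q10 : ∀ x y, p 1 0 x y = (p 0 0 x 0 + p 1 0 x 0) - p 0 0 x y := by
    intro x y; have := hB0 x y 0; linarith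
  have q11 : ∀ x y, p 1 1 x y =
      1 - (p 0 0 0 y + p 0 1 0 y) - (p 0 0 x 0 + p 1 0 x 0) + p 0 0 x y := by
    intro x y
    have h1 := hn x y; have h2 := q01 x y; have h3 := q10 x y; linarith
  have hvan : ∀ a b x y, p a b x y = 0 → e a b x y = 0 := by
    intro a b x y h
    rcases fin2 a with rfl | rfl <;> rcases fin2 b with rfl | rfl <;>
      rcases fin2 x with rfl | rfl <;> rcases fin2 y with rfl | rfl
    · rw [e00, hW00]; exact I00.1 h
    · rw [e00, hW01]; exact I01.1 h
    · rw [e00, hW10]; exact I10.1 h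
    · rw [e00, hW11]; exact I11.1 h
    · rw [e01, hW00, hU0]; have := I00.2.1 (by have := q01 0 0; linarith); linarith
    · rw [e01, hW01, hU1]; have := I01.2.1 (by have := q01 0 1; linarith); linarith
    · rw [e01, hW10, hU0]; have := I10.2.1 (by have := q01 1 0; linarith); linarith
    · rw [e01, hW11, hU1]; have := I11.2.1 (by have := q01 1 1; linarith); linarith
    · rw [e10, hW00, hV0]; have := I00.2.2.1 (by have := q10 0 0; linarith); linarith
    · rw [e10, hW01, hV0]; have := I01.2.2.1 (by have := q10 0 1; linarith); linarith
    · rw [e10, hW10, hV1]; have := I10.2.2.1 (by have := q10 1 0; linarith); linarith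
    · rw [e10, hW11, hV1]; have := I11.2.2.1 (by have := q10 1 1; linarith); linarith
    · rw [e11, hW00, hU0, hV0]
      have := I00.2.2.2 (by have := q11 0 0; linarith); linarith
    · rw [e11, hW01, hU1, hV0]
      have := I01.2.2.2 (by have := q11 0 1; linarith); linarith
    · rw [e11, hW10, hU0, hV1]
      have := I10.2.2.2 (by have := q11 1 0; linarith); linarith
    · rw [e11, hW11, hU1, hV1]
      have := I11.2.2.2 (by have := q11 1 1; linarith); linarith
  set g : Fin 2 × Fin 2 × Fin 2 × Fin 2 → ℝ := fun t =>
    if p t.1 t.2.1 t.2.2.1 t.2.2.2 = 0 then 1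
    else p t.1 t.2.1 t.2.2.1 t.2.2.2 / (|e t.1 t.2.1 t.2.2.1 t.2.2.2| + 1) with hg
  have hgpos : ∀ t, 0 < g t := by
    intro t
    rw [hg]; dsimp only
    split_ifs with h
    · norm_num
    · have h1 : 0 < p t.1 t.2.1 t.2.2.1 t.2.2.2 :=
        lt_of_le_of_ne (hpos _ _ _ _) (Ne.symm h)
      have h2 : 0 ≤ |e t.1 t.2.1 t.2.2.1 t.2.2.2| := abs_nonneg _
      positivity
  set ε := Finset.univ.inf' Finset.univ_nonempty g with hεdef
  have hεpos : 0 < ε := by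
    rw [hεdef, Finset.lt_inf'_iff]
    exact fun t _ => hgpos t
  have hkey : ∀ a b x y, ε * |e a b x y| ≤ p a b x y := by
    intro a b x y
    have hle : ε ≤ g (a, b, x, y) := Finset.inf'_le _ (Finset.mem_univ _)
    rw [hg] at hle; dsimp only at hle
    by_cases h : p a b x y = 0
    · rw [hvan a b x y h, h, abs_zero, mul_zero]
    · rw [if_neg h] at hle
      have hppos : 0 < p a b x y := lt_of_le_of_ne (hpos a b x y) (Ne.symm h)
      rw [le_div_iff₀ (by positivity)] at hle
      nlinarith [abs_nonneg (e a b x y)]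
  have hpm : ∀ s : ℝ, s = 1 ∨ s = -1 →
      (fun a b x y => p a b x y + s * (ε * e a b x y)) ∈ Sset := by
    intro s hs
    rw [mem_Sset_iff]
    have hbnd : ∀ a b x y, 0 ≤ p a b x y + s * (ε * e a b x y) := by
      intro a b x y
      have h1 := hkey a b x y
      have h2 := le_abs_self (e a b x y)
      have h3 := neg_abs_le (e a b x y)
      have h4 : ε * -|e a b x y| ≤ ε * e a b x y :=
        mul_le_mul_of_nonneg_left h3 (le_of_lt hεpos)
      have h5 : ε * e a b x y ≤ ε * |e a b x y| :=
        mul_le_mul_of_nonneg_left h2 (le_of_lt hεpos)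
      rcases hs with rfl | rfl <;> nlinarith
    refine ⟨hbnd, fun x y => ?_, fun x x' y => ?_, fun x x' y => ?_,
      fun x y y' => ?_, fun x y y' => ?_⟩
    · rw [e00, e01, e10, e11]
      linear_combination hn x y
    · rw [e00, e00, e01, e01]
      linear_combination hA0 x x' y
    · rw [e10, e10, e11, e11]
      linear_combination hA1 x x' y
    · rw [e00, e00, e10, e10]
      linear_combination hB0 x y y'
    · rw [e01, e01, e11, e11]
      linear_combination hB1 x y y'
  have hseg : p ∈ openSegment ℝ (fun a b x y => p a b x y + 1 * (ε * e a b x y))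
      (fun a b x y => p a b x y + (-1) * (ε * e a b x y)) := by
    refine ⟨1/2, 1/2, by norm_num, by norm_num, by norm_num, ?_⟩
    funext a b x y
    simp only [Pi.add_apply, Pi.smul_apply, smul_eq_mul]
    ring
  obtain ⟨hq1e, -⟩ := hext (fun a b x y => p a b x y + 1 * (ε * e a b x y))
    (hpm 1 (Or.inl rfl)) (fun a b x y => p a b x y + (-1) * (ε * e a b x y))
    (hpm (-1) (Or.inr rfl)) hseg
  have hezero : ∀ a b x y, e a b x y = 0 := by
    intro a b x y
    have h1 := congrFun (congrFun (congrFun (congrFun hq1e a) b) x) y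
    have h2 : ε * e a b x y = 0 := by linarith
    rcases mul_eq_zero.mp h2 with h | h
    · exact absurd h (ne_of_gt hεpos)
    · exact h
  have z00 := hezero 0 0 0 0; rw [e00, hW00] at z00
  have z01 := hezero 0 0 0 1; rw [e00, hW01] at z01
  have z10 := hezero 0 0 1 0; rw [e00, hW10] at z10
  have z11 := hezero 0 0 1 1; rw [e00, hW11] at z11
  have zu0 := hezero 0 1 0 0; rw [e01, hW00, hU0] at zu0
  have zu1 := hezero 0 1 0 1; rw [e01, hW01, hU1] at zu1
  have zv0 := hezero 1 0 0 0; rw [e10, hW00, hV0] at zv0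
  have zv1 := hezero 1 0 1 0; rw [e10, hW10, hV1] at zv1
  refine ⟨by linarith, by linarith, by linarith, by linarith,
    z00, z10, z01, z11⟩


def DetSet : Set Beh := {p : Beh | ∃ α β μ ν : Fin 2, p = fun a b x y =>
    if a = μ * y + α ∧ b = ν * x + β then (1 : ℝ) else 0}

def PRSet : Set Beh := {p : Beh | ∃ γ δ ε : Fin 2, p = fun a b x y =>
    if a + b = (x + γ) * (y + δ) + ε then (1 : ℝ) / 2 else 0}

lemma blk_of_mem {p : Beh} (hp : p ∈ Sset) (x y : Fin 2) :
    Blk (p 0 0 0 y + p 0 1 0 y) (p 0 0 x 0 + p 1 0 x 0) (p 0 0 x y) := by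
  obtain ⟨hpos, hn, hA0, hA1, hB0, hB1⟩ := mem_Sset_iff.mp hp
  refine ⟨hpos 0 0 x y, ?_, ?_, ?_⟩
  · have := hA0 x 0 y; linarith [hpos 0 1 x y]
  · have := hB0 x y 0; linarith [hpos 1 0 x y]
  · have h1 := hn x y; have h2 := hA0 x 0 y; have h3 := hB0 x y 0
    linarith [hpos 1 1 x y]

set_option maxHeartbeats 2000000 in
lemma forward : Sset.extremePoints ℝ ⊆ DetSet ∪ PRSet := by
  intro p hp
  have hpS := hp.1
  obtain ⟨hpos, hn, hA0m, hA1m, hB0m, hB1m⟩ := mem_Sset_iff.mp hpS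
  have hx := hx_of_extreme hp
  rcases paramClassify hx (blk_of_mem hpS 0 0) (blk_of_mem hpS 1 0)
      (blk_of_mem hpS 0 1) (blk_of_mem hpS 1 1) with
    ⟨hA0, hA1, hB0, hB1, hc00, hc10, hc01, hc11⟩ |
    ⟨hA0, hA1, hB0, hB1, hd00, hd10, hd01, hd11, hsum⟩
  · rcases hA0 with hA0 | hA0 <;> rcases hA1 with hA1 | hA1 <;>
      rcases hB0 with hB0 | hB0 <;> rcases hB1 with hB1 | hB1
    · -- A0=0 A1=0 B0=0 B1=0
      have c00v := hc00
      rw [hA0, hB0] at c00v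
      norm_num at c00v
      have c10v := hc10
      rw [hA0, hB1] at c10v
      norm_num at c10v
      have c01v := hc01
      rw [hA1, hB0] at c01v
      norm_num at c01v
      have c11v := hc11
      rw [hA1, hB1] at c11v
      norm_num at c11v
      refine Or.inl ⟨1, 1, 0, 0, ?_⟩
      funext a b x y
      rcases fin2 a with rfl | rfl <;> rcases fin2 b with rfl | rfl <;>
      rcases fin2 x with rfl | rfl <;> rcases fin2 y with rfl | rfl
      all_goals first
        | (rw [if_pos (by decide)]; linarith [hA0m 1 0 0, hA0m 1 0 1, hB0m 0 1 0, hB0m 1 1 0, hn 0 0, hn 0 1, hn 1 0, hn 1 1])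
        | (rw [if_neg (by decide)]; linarith [hA0m 1 0 0, hA0m 1 0 1, hB0m 0 1 0, hB0m 1 1 0, hn 0 0, hn 0 1, hn 1 0, hn 1 1])
    · -- A0=0 A1=0 B0=0 B1=1
      have c00v := hc00
      rw [hA0, hB0] at c00v
      norm_num at c00v
      have c10v := hc10
      rw [hA0, hB1] at c10v
      norm_num at c10v
      have c01v := hc01
      rw [hA1, hB0] at c01v
      norm_num at c01v
      have c11v := hc11
      rw [hA1, hB1] at c11v
      norm_num at c11v
      refine Or.inl ⟨1, 1, 0, 1, ?_⟩
      funext a b x y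
      rcases fin2 a with rfl | rfl <;> rcases fin2 b with rfl | rfl <;>
      rcases fin2 x with rfl | rfl <;> rcases fin2 y with rfl | rfl
      all_goals first
        | (rw [if_pos (by decide)]; linarith [hA0m 1 0 0, hA0m 1 0 1, hB0m 0 1 0, hB0m 1 1 0, hn 0 0, hn 0 1, hn 1 0, hn 1 1])
        | (rw [if_neg (by decide)]; linarith [hA0m 1 0 0, hA0m 1 0 1, hB0m 0 1 0, hB0m 1 1 0, hn 0 0, hn 0 1, hn 1 0, hn 1 1])
    · -- A0=0 A1=0 B0=1 B1=0
      have c00v := hc00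
      rw [hA0, hB0] at c00v
      norm_num at c00v
      have c10v := hc10
      rw [hA0, hB1] at c10v
      norm_num at c10v
      have c01v := hc01
      rw [hA1, hB0] at c01v
      norm_num at c01v
      have c11v := hc11
      rw [hA1, hB1] at c11v
      norm_num at c11v
      refine Or.inl ⟨1, 0, 0, 1, ?_⟩
      funext a b x y
      rcases fin2 a with rfl | rfl <;> rcases fin2 b with rfl | rfl <;>
      rcases fin2 x with rfl | rfl <;> rcases fin2 y with rfl | rfl
      all_goals first
        | (rw [if_pos (by decide)]; linarith [hA0m 1 0 0, hA0m 1 0 1, hB0m 0 1 0, hB0m 1 1 0, hn 0 0, hn 0 1, hn 1 0, hn 1 1])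
        | (rw [if_neg (by decide)]; linarith [hA0m 1 0 0, hA0m 1 0 1, hB0m 0 1 0, hB0m 1 1 0, hn 0 0, hn 0 1, hn 1 0, hn 1 1])
    · -- A0=0 A1=0 B0=1 B1=1
      have c00v := hc00
      rw [hA0, hB0] at c00v
      norm_num at c00v
      have c10v := hc10
      rw [hA0, hB1] at c10v
      norm_num at c10v
      have c01v := hc01
      rw [hA1, hB0] at c01v
      norm_num at c01v
      have c11v := hc11
      rw [hA1, hB1] at c11v
      norm_num at c11v
      refine Or.inl ⟨1, 0, 0, 0, ?_⟩
      funext a b x y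
      rcases fin2 a with rfl | rfl <;> rcases fin2 b with rfl | rfl <;>
      rcases fin2 x with rfl | rfl <;> rcases fin2 y with rfl | rfl
      all_goals first
        | (rw [if_pos (by decide)]; linarith [hA0m 1 0 0, hA0m 1 0 1, hB0m 0 1 0, hB0m 1 1 0, hn 0 0, hn 0 1, hn 1 0, hn 1 1])
        | (rw [if_neg (by decide)]; linarith [hA0m 1 0 0, hA0m 1 0 1, hB0m 0 1 0, hB0m 1 1 0, hn 0 0, hn 0 1, hn 1 0, hn 1 1])
    · -- A0=0 A1=1 B0=0 B1=0
      have c00v := hc00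
      rw [hA0, hB0] at c00v
      norm_num at c00v
      have c10v := hc10
      rw [hA0, hB1] at c10v
      norm_num at c10v
      have c01v := hc01
      rw [hA1, hB0] at c01v
      norm_num at c01v
      have c11v := hc11
      rw [hA1, hB1] at c11v
      norm_num at c11v
      refine Or.inl ⟨1, 1, 1, 0, ?_⟩
      funext a b x y
      rcases fin2 a with rfl | rfl <;> rcases fin2 b with rfl | rfl <;>
      rcases fin2 x with rfl | rfl <;> rcases fin2 y with rfl | rfl
      all_goals first
        | (rw [if_pos (by decide)]; linarith [hA0m 1 0 0, hA0m 1 0 1, hB0m 0 1 0, hB0m 1 1 0, hn 0 0, hn 0 1, hn 1 0, hn 1 1])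
        | (rw [if_neg (by decide)]; linarith [hA0m 1 0 0, hA0m 1 0 1, hB0m 0 1 0, hB0m 1 1 0, hn 0 0, hn 0 1, hn 1 0, hn 1 1])
    · -- A0=0 A1=1 B0=0 B1=1
      have c00v := hc00
      rw [hA0, hB0] at c00v
      norm_num at c00v
      have c10v := hc10
      rw [hA0, hB1] at c10v
      norm_num at c10v
      have c01v := hc01
      rw [hA1, hB0] at c01v
      norm_num at c01v
      have c11v := hc11
      rw [hA1, hB1] at c11v
      norm_num at c11v
      refine Or.inl ⟨1, 1, 1, 1, ?_⟩
      funext a b x y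
      rcases fin2 a with rfl | rfl <;> rcases fin2 b with rfl | rfl <;>
      rcases fin2 x with rfl | rfl <;> rcases fin2 y with rfl | rfl
      all_goals first
        | (rw [if_pos (by decide)]; linarith [hA0m 1 0 0, hA0m 1 0 1, hB0m 0 1 0, hB0m 1 1 0, hn 0 0, hn 0 1, hn 1 0, hn 1 1])
        | (rw [if_neg (by decide)]; linarith [hA0m 1 0 0, hA0m 1 0 1, hB0m 0 1 0, hB0m 1 1 0, hn 0 0, hn 0 1, hn 1 0, hn 1 1])
    · -- A0=0 A1=1 B0=1 B1=0
      have c00v := hc00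
      rw [hA0, hB0] at c00v
      norm_num at c00v
      have c10v := hc10
      rw [hA0, hB1] at c10v
      norm_num at c10v
      have c01v := hc01
      rw [hA1, hB0] at c01v
      norm_num at c01v
      have c11v := hc11
      rw [hA1, hB1] at c11v
      norm_num at c11v
      refine Or.inl ⟨1, 0, 1, 1, ?_⟩
      funext a b x y
      rcases fin2 a with rfl | rfl <;> rcases fin2 b with rfl | rfl <;>
      rcases fin2 x with rfl | rfl <;> rcases fin2 y with rfl | rfl
      all_goals first
        | (rw [if_pos (by decide)]; linarith [hA0m 1 0 0, hA0m 1 0 1, hB0m 0 1 0, hB0m 1 1 0, hn 0 0, hn 0 1, hn 1 0, hn 1 1])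
        | (rw [if_neg (by decide)]; linarith [hA0m 1 0 0, hA0m 1 0 1, hB0m 0 1 0, hB0m 1 1 0, hn 0 0, hn 0 1, hn 1 0, hn 1 1])
    · -- A0=0 A1=1 B0=1 B1=1
      have c00v := hc00
      rw [hA0, hB0] at c00v
      norm_num at c00v
      have c10v := hc10
      rw [hA0, hB1] at c10v
      norm_num at c10v
      have c01v := hc01
      rw [hA1, hB0] at c01v
      norm_num at c01v
      have c11v := hc11
      rw [hA1, hB1] at c11v
      norm_num at c11v
      refine Or.inl ⟨1, 0, 1, 0, ?_⟩
      funext a b x y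
      rcases fin2 a with rfl | rfl <;> rcases fin2 b with rfl | rfl <;>
      rcases fin2 x with rfl | rfl <;> rcases fin2 y with rfl | rfl
      all_goals first
        | (rw [if_pos (by decide)]; linarith [hA0m 1 0 0, hA0m 1 0 1, hB0m 0 1 0, hB0m 1 1 0, hn 0 0, hn 0 1, hn 1 0, hn 1 1])
        | (rw [if_neg (by decide)]; linarith [hA0m 1 0 0, hA0m 1 0 1, hB0m 0 1 0, hB0m 1 1 0, hn 0 0, hn 0 1, hn 1 0, hn 1 1])
    · -- A0=1 A1=0 B0=0 B1=0
      have c00v := hc00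
      rw [hA0, hB0] at c00v
      norm_num at c00v
      have c10v := hc10
      rw [hA0, hB1] at c10v
      norm_num at c10v
      have c01v := hc01
      rw [hA1, hB0] at c01v
      norm_num at c01v
      have c11v := hc11
      rw [hA1, hB1] at c11v
      norm_num at c11v
      refine Or.inl ⟨0, 1, 1, 0, ?_⟩
      funext a b x y
      rcases fin2 a with rfl | rfl <;> rcases fin2 b with rfl | rfl <;>
      rcases fin2 x with rfl | rfl <;> rcases fin2 y with rfl | rfl
      all_goals first
        | (rw [if_pos (by decide)]; linarith [hA0m 1 0 0, hA0m 1 0 1, hB0m 0 1 0, hB0m 1 1 0, hn 0 0, hn 0 1, hn 1 0, hn 1 1])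
        | (rw [if_neg (by decide)]; linarith [hA0m 1 0 0, hA0m 1 0 1, hB0m 0 1 0, hB0m 1 1 0, hn 0 0, hn 0 1, hn 1 0, hn 1 1])
    · -- A0=1 A1=0 B0=0 B1=1
      have c00v := hc00
      rw [hA0, hB0] at c00v
      norm_num at c00v
      have c10v := hc10
      rw [hA0, hB1] at c10v
      norm_num at c10v
      have c01v := hc01
      rw [hA1, hB0] at c01v
      norm_num at c01v
      have c11v := hc11
      rw [hA1, hB1] at c11v
      norm_num at c11v
      refine Or.inl ⟨0, 1, 1, 1, ?_⟩
      funext a b x y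
      rcases fin2 a with rfl | rfl <;> rcases fin2 b with rfl | rfl <;>
      rcases fin2 x with rfl | rfl <;> rcases fin2 y with rfl | rfl
      all_goals first
        | (rw [if_pos (by decide)]; linarith [hA0m 1 0 0, hA0m 1 0 1, hB0m 0 1 0, hB0m 1 1 0, hn 0 0, hn 0 1, hn 1 0, hn 1 1])
        | (rw [if_neg (by decide)]; linarith [hA0m 1 0 0, hA0m 1 0 1, hB0m 0 1 0, hB0m 1 1 0, hn 0 0, hn 0 1, hn 1 0, hn 1 1])
    · -- A0=1 A1=0 B0=1 B1=0
      have c00v := hc00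
      rw [hA0, hB0] at c00v
      norm_num at c00v
      have c10v := hc10
      rw [hA0, hB1] at c10v
      norm_num at c10v
      have c01v := hc01
      rw [hA1, hB0] at c01v
      norm_num at c01v
      have c11v := hc11
      rw [hA1, hB1] at c11v
      norm_num at c11v
      refine Or.inl ⟨0, 0, 1, 1, ?_⟩
      funext a b x y
      rcases fin2 a with rfl | rfl <;> rcases fin2 b with rfl | rfl <;>
      rcases fin2 x with rfl | rfl <;> rcases fin2 y with rfl | rfl
      all_goals first
        | (rw [if_pos (by decide)]; linarith [hA0m 1 0 0, hA0m 1 0 1, hB0m 0 1 0, hB0m 1 1 0, hn 0 0, hn 0 1, hn 1 0, hn 1 1])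
        | (rw [if_neg (by decide)]; linarith [hA0m 1 0 0, hA0m 1 0 1, hB0m 0 1 0, hB0m 1 1 0, hn 0 0, hn 0 1, hn 1 0, hn 1 1])
    · -- A0=1 A1=0 B0=1 B1=1
      have c00v := hc00
      rw [hA0, hB0] at c00v
      norm_num at c00v
      have c10v := hc10
      rw [hA0, hB1] at c10v
      norm_num at c10v
      have c01v := hc01
      rw [hA1, hB0] at c01v
      norm_num at c01v
      have c11v := hc11
      rw [hA1, hB1] at c11v
      norm_num at c11v
      refine Or.inl ⟨0, 0, 1, 0, ?_⟩
      funext a b x y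
      rcases fin2 a with rfl | rfl <;> rcases fin2 b with rfl | rfl <;>
      rcases fin2 x with rfl | rfl <;> rcases fin2 y with rfl | rfl
      all_goals first
        | (rw [if_pos (by decide)]; linarith [hA0m 1 0 0, hA0m 1 0 1, hB0m 0 1 0, hB0m 1 1 0, hn 0 0, hn 0 1, hn 1 0, hn 1 1])
        | (rw [if_neg (by decide)]; linarith [hA0m 1 0 0, hA0m 1 0 1, hB0m 0 1 0, hB0m 1 1 0, hn 0 0, hn 0 1, hn 1 0, hn 1 1])
    · -- A0=1 A1=1 B0=0 B1=0
      have c00v := hc00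
      rw [hA0, hB0] at c00v
      norm_num at c00v
      have c10v := hc10
      rw [hA0, hB1] at c10v
      norm_num at c10v
      have c01v := hc01
      rw [hA1, hB0] at c01v
      norm_num at c01v
      have c11v := hc11
      rw [hA1, hB1] at c11v
      norm_num at c11v
      refine Or.inl ⟨0, 1, 0, 0, ?_⟩
      funext a b x y
      rcases fin2 a with rfl | rfl <;> rcases fin2 b with rfl | rfl <;>
      rcases fin2 x with rfl | rfl <;> rcases fin2 y with rfl | rfl
      all_goals first
        | (rw [if_pos (by decide)]; linarith [hA0m 1 0 0, hA0m 1 0 1, hB0m 0 1 0, hB0m 1 1 0, hn 0 0, hn 0 1, hn 1 0, hn 1 1])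
        | (rw [if_neg (by decide)]; linarith [hA0m 1 0 0, hA0m 1 0 1, hB0m 0 1 0, hB0m 1 1 0, hn 0 0, hn 0 1, hn 1 0, hn 1 1])
    · -- A0=1 A1=1 B0=0 B1=1
      have c00v := hc00
      rw [hA0, hB0] at c00v
      norm_num at c00v
      have c10v := hc10
      rw [hA0, hB1] at c10v
      norm_num at c10v
      have c01v := hc01
      rw [hA1, hB0] at c01v
      norm_num at c01v
      have c11v := hc11
      rw [hA1, hB1] at c11v
      norm_num at c11v
      refine Or.inl ⟨0, 1, 0, 1, ?_⟩
      funext a b x y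
      rcases fin2 a with rfl | rfl <;> rcases fin2 b with rfl | rfl <;>
      rcases fin2 x with rfl | rfl <;> rcases fin2 y with rfl | rfl
      all_goals first
        | (rw [if_pos (by decide)]; linarith [hA0m 1 0 0, hA0m 1 0 1, hB0m 0 1 0, hB0m 1 1 0, hn 0 0, hn 0 1, hn 1 0, hn 1 1])
        | (rw [if_neg (by decide)]; linarith [hA0m 1 0 0, hA0m 1 0 1, hB0m 0 1 0, hB0m 1 1 0, hn 0 0, hn 0 1, hn 1 0, hn 1 1])
    · -- A0=1 A1=1 B0=1 B1=0
      have c00v := hc00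
      rw [hA0, hB0] at c00v
      norm_num at c00v
      have c10v := hc10
      rw [hA0, hB1] at c10v
      norm_num at c10v
      have c01v := hc01
      rw [hA1, hB0] at c01v
      norm_num at c01v
      have c11v := hc11
      rw [hA1, hB1] at c11v
      norm_num at c11v
      refine Or.inl ⟨0, 0, 0, 1, ?_⟩
      funext a b x y
      rcases fin2 a with rfl | rfl <;> rcases fin2 b with rfl | rfl <;>
      rcases fin2 x with rfl | rfl <;> rcases fin2 y with rfl | rfl
      all_goals first
        | (rw [if_pos (by decide)]; linarith [hA0m 1 0 0, hA0m 1 0 1, hB0m 0 1 0, hB0m 1 1 0, hn 0 0, hn 0 1, hn 1 0, hn 1 1])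
        | (rw [if_neg (by decide)]; linarith [hA0m 1 0 0, hA0m 1 0 1, hB0m 0 1 0, hB0m 1 1 0, hn 0 0, hn 0 1, hn 1 0, hn 1 1])
    · -- A0=1 A1=1 B0=1 B1=1
      have c00v := hc00
      rw [hA0, hB0] at c00v
      norm_num at c00v
      have c10v := hc10
      rw [hA0, hB1] at c10v
      norm_num at c10v
      have c01v := hc01
      rw [hA1, hB0] at c01v
      norm_num at c01v
      have c11v := hc11
      rw [hA1, hB1] at c11v
      norm_num at c11v
      refine Or.inl ⟨0, 0, 0, 0, ?_⟩
      funext a b x y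
      rcases fin2 a with rfl | rfl <;> rcases fin2 b with rfl | rfl <;>
      rcases fin2 x with rfl | rfl <;> rcases fin2 y with rfl | rfl
      all_goals first
        | (rw [if_pos (by decide)]; linarith [hA0m 1 0 0, hA0m 1 0 1, hB0m 0 1 0, hB0m 1 1 0, hn 0 0, hn 0 1, hn 1 0, hn 1 1])
        | (rw [if_neg (by decide)]; linarith [hA0m 1 0 0, hA0m 1 0 1, hB0m 0 1 0, hB0m 1 1 0, hn 0 0, hn 0 1, hn 1 0, hn 1 1])
  · rcases hd00 with hd00 | hd00 <;> rcases hd10 with hd10 | hd10 <;>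
      rcases hd01 with hd01 | hd01 <;> rcases hd11 with hd11 | hd11
    · -- d00=0 d10=0 d01=0 d11=0
      exfalso; rcases hsum with h | h <;> linarith
    · -- d00=0 d10=0 d01=0 d11=1
      refine Or.inr ⟨0, 0, 1, ?_⟩
      funext a b x y
      rcases fin2 a with rfl | rfl <;> rcases fin2 b with rfl | rfl <;>
      rcases fin2 x with rfl | rfl <;> rcases fin2 y with rfl | rfl
      all_goals first
        | (rw [if_pos (by decide)]; linarith [hA0m 1 0 0, hA0m 1 0 1, hB0m 0 1 0, hB0m 1 1 0, hn 0 0, hn 0 1, hn 1 0, hn 1 1])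
        | (rw [if_neg (by decide)]; linarith [hA0m 1 0 0, hA0m 1 0 1, hB0m 0 1 0, hB0m 1 1 0, hn 0 0, hn 0 1, hn 1 0, hn 1 1])
    · -- d00=0 d10=0 d01=1 d11=0
      refine Or.inr ⟨1, 0, 1, ?_⟩
      funext a b x y
      rcases fin2 a with rfl | rfl <;> rcases fin2 b with rfl | rfl <;>
      rcases fin2 x with rfl | rfl <;> rcases fin2 y with rfl | rfl
      all_goals first
        | (rw [if_pos (by decide)]; linarith [hA0m 1 0 0, hA0m 1 0 1, hB0m 0 1 0, hB0m 1 1 0, hn 0 0, hn 0 1, hn 1 0, hn 1 1])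
        | (rw [if_neg (by decide)]; linarith [hA0m 1 0 0, hA0m 1 0 1, hB0m 0 1 0, hB0m 1 1 0, hn 0 0, hn 0 1, hn 1 0, hn 1 1])
    · -- d00=0 d10=0 d01=1 d11=1
      exfalso; rcases hsum with h | h <;> linarith
    · -- d00=0 d10=1 d01=0 d11=0
      refine Or.inr ⟨0, 1, 1, ?_⟩
      funext a b x y
      rcases fin2 a with rfl | rfl <;> rcases fin2 b with rfl | rfl <;>
      rcases fin2 x with rfl | rfl <;> rcases fin2 y with rfl | rfl
      all_goals first
        | (rw [if_pos (by decide)]; linarith [hA0m 1 0 0, hA0m 1 0 1, hB0m 0 1 0, hB0m 1 1 0, hn 0 0, hn 0 1, hn 1 0, hn 1 1])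
        | (rw [if_neg (by decide)]; linarith [hA0m 1 0 0, hA0m 1 0 1, hB0m 0 1 0, hB0m 1 1 0, hn 0 0, hn 0 1, hn 1 0, hn 1 1])
    · -- d00=0 d10=1 d01=0 d11=1
      exfalso; rcases hsum with h | h <;> linarith
    · -- d00=0 d10=1 d01=1 d11=0
      exfalso; rcases hsum with h | h <;> linarith
    · -- d00=0 d10=1 d01=1 d11=1
      refine Or.inr ⟨1, 1, 0, ?_⟩
      funext a b x y
      rcases fin2 a with rfl | rfl <;> rcases fin2 b with rfl | rfl <;>
      rcases fin2 x with rfl | rfl <;> rcases fin2 y with rfl | rfl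
      all_goals first
        | (rw [if_pos (by decide)]; linarith [hA0m 1 0 0, hA0m 1 0 1, hB0m 0 1 0, hB0m 1 1 0, hn 0 0, hn 0 1, hn 1 0, hn 1 1])
        | (rw [if_neg (by decide)]; linarith [hA0m 1 0 0, hA0m 1 0 1, hB0m 0 1 0, hB0m 1 1 0, hn 0 0, hn 0 1, hn 1 0, hn 1 1])
    · -- d00=1 d10=0 d01=0 d11=0
      refine Or.inr ⟨1, 1, 1, ?_⟩
      funext a b x y
      rcases fin2 a with rfl | rfl <;> rcases fin2 b with rfl | rfl <;>
      rcases fin2 x with rfl | rfl <;> rcases fin2 y with rfl | rfl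
      all_goals first
        | (rw [if_pos (by decide)]; linarith [hA0m 1 0 0, hA0m 1 0 1, hB0m 0 1 0, hB0m 1 1 0, hn 0 0, hn 0 1, hn 1 0, hn 1 1])
        | (rw [if_neg (by decide)]; linarith [hA0m 1 0 0, hA0m 1 0 1, hB0m 0 1 0, hB0m 1 1 0, hn 0 0, hn 0 1, hn 1 0, hn 1 1])
    · -- d00=1 d10=0 d01=0 d11=1
      exfalso; rcases hsum with h | h <;> linarith
    · -- d00=1 d10=0 d01=1 d11=0
      exfalso; rcases hsum with h | h <;> linarith
    · -- d00=1 d10=0 d01=1 d11=1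
      refine Or.inr ⟨0, 1, 0, ?_⟩
      funext a b x y
      rcases fin2 a with rfl | rfl <;> rcases fin2 b with rfl | rfl <;>
      rcases fin2 x with rfl | rfl <;> rcases fin2 y with rfl | rfl
      all_goals first
        | (rw [if_pos (by decide)]; linarith [hA0m 1 0 0, hA0m 1 0 1, hB0m 0 1 0, hB0m 1 1 0, hn 0 0, hn 0 1, hn 1 0, hn 1 1])
        | (rw [if_neg (by decide)]; linarith [hA0m 1 0 0, hA0m 1 0 1, hB0m 0 1 0, hB0m 1 1 0, hn 0 0, hn 0 1, hn 1 0, hn 1 1])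
    · -- d00=1 d10=1 d01=0 d11=0
      exfalso; rcases hsum with h | h <;> linarith
    · -- d00=1 d10=1 d01=0 d11=1
      refine Or.inr ⟨1, 0, 0, ?_⟩
      funext a b x y
      rcases fin2 a with rfl | rfl <;> rcases fin2 b with rfl | rfl <;>
      rcases fin2 x with rfl | rfl <;> rcases fin2 y with rfl | rfl
      all_goals first
        | (rw [if_pos (by decide)]; linarith [hA0m 1 0 0, hA0m 1 0 1, hB0m 0 1 0, hB0m 1 1 0, hn 0 0, hn 0 1, hn 1 0, hn 1 1])
        | (rw [if_neg (by decide)]; linarith [hA0m 1 0 0, hA0m 1 0 1, hB0m 0 1 0, hB0m 1 1 0, hn 0 0, hn 0 1, hn 1 0, hn 1 1])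
    · -- d00=1 d10=1 d01=1 d11=0
      refine Or.inr ⟨0, 0, 0, ?_⟩
      funext a b x y
      rcases fin2 a with rfl | rfl <;> rcases fin2 b with rfl | rfl <;>
      rcases fin2 x with rfl | rfl <;> rcases fin2 y with rfl | rfl
      all_goals first
        | (rw [if_pos (by decide)]; linarith [hA0m 1 0 0, hA0m 1 0 1, hB0m 0 1 0, hB0m 1 1 0, hn 0 0, hn 0 1, hn 1 0, hn 1 1])
        | (rw [if_neg (by decide)]; linarith [hA0m 1 0 0, hA0m 1 0 1, hB0m 0 1 0, hB0m 1 1 0, hn 0 0, hn 0 1, hn 1 0, hn 1 1])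
    · -- d00=1 d10=1 d01=1 d11=1
      exfalso; rcases hsum with h | h <;> linarith

lemma det_extreme (α β μ ν : Fin 2) :
    (fun a b x y => if a = μ * y + α ∧ b = ν * x + β then (1 : ℝ) else 0) ∈
      Sset.extremePoints ℝ := by
  classical
  rw [mem_extremePoints]
  constructor
  · rw [mem_Sset_iff]
    refine ⟨fun a b x y => by split_ifs <;> norm_num,
      fun x y => ?_, fun x x' y => ?_, fun x x' y => ?_,
      fun x y y' => ?_, fun x y y' => ?_⟩
    · rcases fin2 (μ * y + α) with h1 | h1 <;> rcases fin2 (ν * x + β) with h2 | h2 <;>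
        rw [h1, h2] <;> norm_num [Fin.ext_iff, Fin.val_natCast]
    · rcases fin2 (μ * y + α) with h1 | h1 <;> rcases fin2 (ν * x + β) with h2 | h2 <;>
        rcases fin2 (ν * x' + β) with h3 | h3 <;> rw [h1, h2, h3] <;> norm_num [Fin.ext_iff, Fin.val_natCast]
    · rcases fin2 (μ * y + α) with h1 | h1 <;> rcases fin2 (ν * x + β) with h2 | h2 <;>
        rcases fin2 (ν * x' + β) with h3 | h3 <;> rw [h1, h2, h3] <;> norm_num [Fin.ext_iff, Fin.val_natCast]
    · rcases fin2 (μ * y + α) with h1 | h1 <;> rcases fin2 (μ * y' + α) with h2 | h2 <;>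
        rcases fin2 (ν * x + β) with h3 | h3 <;> rw [h1, h2, h3] <;> norm_num [Fin.ext_iff, Fin.val_natCast]
    · rcases fin2 (μ * y + α) with h1 | h1 <;> rcases fin2 (μ * y' + α) with h2 | h2 <;>
        rcases fin2 (ν * x + β) with h3 | h3 <;> rw [h1, h2, h3] <;> norm_num [Fin.ext_iff, Fin.val_natCast]
  · intro q hq r hr hseg
    obtain ⟨t, s, ht, hs, hts, heq⟩ := hseg
    obtain ⟨hqpos, hqn, hqA0, hqA1, hqB0, hqB1⟩ := mem_Sset_iff.mp hq
    obtain ⟨hrpos, hrn, hrA0, hrA1, hrB0, hrB1⟩ := mem_Sset_iff.mp hr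
    have hent : ∀ a b x y, t * q a b x y + s * r a b x y =
        (if a = μ * y + α ∧ b = ν * x + β then (1 : ℝ) else 0) := by
      intro a b x y
      have h1 := congrFun (congrFun (congrFun (congrFun heq a) b) x) y
      simpa using h1
    have hzero : ∀ a b x y, ¬(a = μ * y + α ∧ b = ν * x + β) →
        q a b x y = 0 ∧ r a b x y = 0 := by
      intro a b x y h
      have h1 := hent a b x y
      rw [if_neg h] at h1
      constructor <;> nlinarith [hqpos a b x y, hrpos a b x y]
    have main : ∀ q' : Beh,
        (∀ x y, q' 0 0 x y + q' 0 1 x y + q' 1 0 x y + q' 1 1 x y = 1) →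
        (∀ a b x y, ¬(a = μ * y + α ∧ b = ν * x + β) → q' a b x y = 0) →
        q' = (fun a b x y => if a = μ * y + α ∧ b = ν * x + β then (1 : ℝ) else 0) := by
      intro q' hn' hz'
      funext a b x y
      by_cases h : a = μ * y + α ∧ b = ν * x + β
      · rw [if_pos h]
        obtain ⟨ha, hb⟩ := h
        subst ha; subst hb
        have hsum := hn' x y
        rcases fin2 (μ * y + α) with h1 | h1 <;> rcases fin2 (ν * x + β) with h2 | h2 <;>
          rw [h1, h2]
        · have z1 := hz' 0 1 x y (by rw [h1, h2]; decide)
          have z2 := hz' 1 0 x y (by rw [h1, h2]; decide)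
          have z3 := hz' 1 1 x y (by rw [h1, h2]; decide)
          linarith
        · have z1 := hz' 0 0 x y (by rw [h1, h2]; decide)
          have z2 := hz' 1 0 x y (by rw [h1, h2]; decide)
          have z3 := hz' 1 1 x y (by rw [h1, h2]; decide)
          linarith
        · have z1 := hz' 0 0 x y (by rw [h1, h2]; decide)
          have z2 := hz' 0 1 x y (by rw [h1, h2]; decide)
          have z3 := hz' 1 1 x y (by rw [h1, h2]; decide)
          linarith
        · have z1 := hz' 0 0 x y (by rw [h1, h2]; decide)
          have z2 := hz' 0 1 x y (by rw [h1, h2]; decide)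
          have z3 := hz' 1 0 x y (by rw [h1, h2]; decide)
          linarith
      · rw [if_neg h]
        exact hz' a b x y h
    exact ⟨main q hqn (fun a b x y h => (hzero a b x y h).1),
      main r hrn (fun a b x y h => (hzero a b x y h).2)⟩

set_option maxHeartbeats 1000000 in
lemma pr_extreme (γ δ ε : Fin 2) :
    (fun a b x y => if a + b = (x + γ) * (y + δ) + ε then (1 : ℝ) / 2 else 0) ∈
      Sset.extremePoints ℝ := by
  classical
  rw [mem_extremePoints]
  constructor
  · rw [mem_Sset_iff]
    refine ⟨fun a b x y => by split_ifs <;> norm_num,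
      fun x y => ?_, fun x x' y => ?_, fun x x' y => ?_,
      fun x y y' => ?_, fun x y y' => ?_⟩
    · rcases fin2 ((x + γ) * (y + δ) + ε) with h1 | h1 <;>
        rw [h1] <;> simp only [show (0+0:Fin 2)=0 by decide, show (0+1:Fin 2)=1 by decide, show (1+0:Fin 2)=1 by decide, show (1+1:Fin 2)=0 by decide] <;> norm_num [Fin.ext_iff]
    · rcases fin2 ((x + γ) * (y + δ) + ε) with h1 | h1 <;>
        rcases fin2 ((x' + γ) * (y + δ) + ε) with h2 | h2 <;>
        rw [h1, h2] <;> simp only [show (0+0:Fin 2)=0 by decide, show (0+1:Fin 2)=1 by decide, show (1+0:Fin 2)=1 by decide, show (1+1:Fin 2)=0 by decide] <;> norm_num [Fin.ext_iff]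
    · rcases fin2 ((x + γ) * (y + δ) + ε) with h1 | h1 <;>
        rcases fin2 ((x' + γ) * (y + δ) + ε) with h2 | h2 <;>
        rw [h1, h2] <;> simp only [show (0+0:Fin 2)=0 by decide, show (0+1:Fin 2)=1 by decide, show (1+0:Fin 2)=1 by decide, show (1+1:Fin 2)=0 by decide] <;> norm_num [Fin.ext_iff]
    · rcases fin2 ((x + γ) * (y + δ) + ε) with h1 | h1 <;>
        rcases fin2 ((x + γ) * (y' + δ) + ε) with h2 | h2 <;>
        rw [h1, h2] <;> simp only [show (0+0:Fin 2)=0 by decide, show (0+1:Fin 2)=1 by decide, show (1+0:Fin 2)=1 by decide, show (1+1:Fin 2)=0 by decide] <;> norm_num [Fin.ext_iff]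
    · rcases fin2 ((x + γ) * (y + δ) + ε) with h1 | h1 <;>
        rcases fin2 ((x + γ) * (y' + δ) + ε) with h2 | h2 <;>
        rw [h1, h2] <;> simp only [show (0+0:Fin 2)=0 by decide, show (0+1:Fin 2)=1 by decide, show (1+0:Fin 2)=1 by decide, show (1+1:Fin 2)=0 by decide] <;> norm_num [Fin.ext_iff]
  · intro q hq r hr hseg
    obtain ⟨t, s, ht, hs, hts, heq⟩ := hseg
    obtain ⟨hqpos, hqn, hqA0, hqA1, hqB0, hqB1⟩ := mem_Sset_iff.mp hq
    obtain ⟨hrpos, hrn, hrA0, hrA1, hrB0, hrB1⟩ := mem_Sset_iff.mp hr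
    have hent : ∀ a b x y, t * q a b x y + s * r a b x y =
        (if a + b = (x + γ) * (y + δ) + ε then (1 : ℝ) / 2 else 0) := by
      intro a b x y
      have h1 := congrFun (congrFun (congrFun (congrFun heq a) b) x) y
      simpa using h1
    have hzero : ∀ a b x y, ¬(a + b = (x + γ) * (y + δ) + ε) →
        q a b x y = 0 ∧ r a b x y = 0 := by
      intro a b x y h
      have h1 := hent a b x y
      rw [if_neg h] at h1
      constructor <;> nlinarith [hqpos a b x y, hrpos a b x y]
    have main : ∀ q' : Beh, q' ∈ Sset →
        (∀ a b x y, ¬(a + b = (x + γ) * (y + δ) + ε) → q' a b x y = 0) →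
        q' = (fun a b x y =>
          if a + b = (x + γ) * (y + δ) + ε then (1 : ℝ) / 2 else 0) := by
      intro q' hq' hz'
      obtain ⟨hpos, hsum, hA0, hA1, hB0, hB1⟩ := mem_Sset_iff.mp hq'
      fin_cases γ <;> fin_cases δ <;> fin_cases ε
      · -- γ=0 δ=0 ε=0
        have z0 := hz' 0 0 1 1 (by decide)
        have z1 := hz' 0 1 0 0 (by decide)
        have z2 := hz' 0 1 0 1 (by decide)
        have z3 := hz' 0 1 1 0 (by decide)
        have z4 := hz' 1 0 0 0 (by decide)
        have z5 := hz' 1 0 0 1 (by decide)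
        have z6 := hz' 1 0 1 0 (by decide)
        have z7 := hz' 1 1 1 1 (by decide)
        funext a b x y
        rcases fin2 a with rfl | rfl <;> rcases fin2 b with rfl | rfl <;>
          rcases fin2 x with rfl | rfl <;> rcases fin2 y with rfl | rfl
        all_goals first
          | (rw [if_pos (by decide)]; linarith [hsum 0 0, hsum 0 1, hsum 1 0, hsum 1 1, hA0 1 0 0, hA0 1 0 1, hA1 1 0 0, hA1 1 0 1, hB0 0 1 0, hB0 1 1 0, hB1 0 1 0, hB1 1 1 0])
          | (rw [if_neg (by decide)]; linarith [hsum 0 0, hsum 0 1, hsum 1 0, hsum 1 1, hA0 1 0 0, hA0 1 0 1, hA1 1 0 0, hA1 1 0 1, hB0 0 1 0, hB0 1 1 0, hB1 0 1 0, hB1 1 1 0])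
      · -- γ=0 δ=0 ε=1
        have z0 := hz' 0 0 0 0 (by decide)
        have z1 := hz' 0 0 0 1 (by decide)
        have z2 := hz' 0 0 1 0 (by decide)
        have z3 := hz' 0 1 1 1 (by decide)
        have z4 := hz' 1 0 1 1 (by decide)
        have z5 := hz' 1 1 0 0 (by decide)
        have z6 := hz' 1 1 0 1 (by decide)
        have z7 := hz' 1 1 1 0 (by decide)
        funext a b x y
        rcases fin2 a with rfl | rfl <;> rcases fin2 b with rfl | rfl <;>
          rcases fin2 x with rfl | rfl <;> rcases fin2 y with rfl | rfl
        all_goals first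
          | (rw [if_pos (by decide)]; linarith [hsum 0 0, hsum 0 1, hsum 1 0, hsum 1 1, hA0 1 0 0, hA0 1 0 1, hA1 1 0 0, hA1 1 0 1, hB0 0 1 0, hB0 1 1 0, hB1 0 1 0, hB1 1 1 0])
          | (rw [if_neg (by decide)]; linarith [hsum 0 0, hsum 0 1, hsum 1 0, hsum 1 1, hA0 1 0 0, hA0 1 0 1, hA1 1 0 0, hA1 1 0 1, hB0 0 1 0, hB0 1 1 0, hB1 0 1 0, hB1 1 1 0])
      · -- γ=0 δ=1 ε=0
        have z0 := hz' 0 0 1 0 (by decide)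
        have z1 := hz' 0 1 0 0 (by decide)
        have z2 := hz' 0 1 0 1 (by decide)
        have z3 := hz' 0 1 1 1 (by decide)
        have z4 := hz' 1 0 0 0 (by decide)
        have z5 := hz' 1 0 0 1 (by decide)
        have z6 := hz' 1 0 1 1 (by decide)
        have z7 := hz' 1 1 1 0 (by decide)
        funext a b x y
        rcases fin2 a with rfl | rfl <;> rcases fin2 b with rfl | rfl <;>
          rcases fin2 x with rfl | rfl <;> rcases fin2 y with rfl | rfl
        all_goals first
          | (rw [if_pos (by decide)]; linarith [hsum 0 0, hsum 0 1, hsum 1 0, hsum 1 1, hA0 1 0 0, hA0 1 0 1, hA1 1 0 0, hA1 1 0 1, hB0 0 1 0, hB0 1 1 0, hB1 0 1 0, hB1 1 1 0])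
          | (rw [if_neg (by decide)]; linarith [hsum 0 0, hsum 0 1, hsum 1 0, hsum 1 1, hA0 1 0 0, hA0 1 0 1, hA1 1 0 0, hA1 1 0 1, hB0 0 1 0, hB0 1 1 0, hB1 0 1 0, hB1 1 1 0])
      · -- γ=0 δ=1 ε=1
        have z0 := hz' 0 0 0 0 (by decide)
        have z1 := hz' 0 0 0 1 (by decide)
        have z2 := hz' 0 0 1 1 (by decide)
        have z3 := hz' 0 1 1 0 (by decide)
        have z4 := hz' 1 0 1 0 (by decide)
        have z5 := hz' 1 1 0 0 (by decide)
        have z6 := hz' 1 1 0 1 (by decide)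
        have z7 := hz' 1 1 1 1 (by decide)
        funext a b x y
        rcases fin2 a with rfl | rfl <;> rcases fin2 b with rfl | rfl <;>
          rcases fin2 x with rfl | rfl <;> rcases fin2 y with rfl | rfl
        all_goals first
          | (rw [if_pos (by decide)]; linarith [hsum 0 0, hsum 0 1, hsum 1 0, hsum 1 1, hA0 1 0 0, hA0 1 0 1, hA1 1 0 0, hA1 1 0 1, hB0 0 1 0, hB0 1 1 0, hB1 0 1 0, hB1 1 1 0])
          | (rw [if_neg (by decide)]; linarith [hsum 0 0, hsum 0 1, hsum 1 0, hsum 1 1, hA0 1 0 0, hA0 1 0 1, hA1 1 0 0, hA1 1 0 1, hB0 0 1 0, hB0 1 1 0, hB1 0 1 0, hB1 1 1 0])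
      · -- γ=1 δ=0 ε=0
        have z0 := hz' 0 0 0 1 (by decide)
        have z1 := hz' 0 1 0 0 (by decide)
        have z2 := hz' 0 1 1 0 (by decide)
        have z3 := hz' 0 1 1 1 (by decide)
        have z4 := hz' 1 0 0 0 (by decide)
        have z5 := hz' 1 0 1 0 (by decide)
        have z6 := hz' 1 0 1 1 (by decide)
        have z7 := hz' 1 1 0 1 (by decide)
        funext a b x y
        rcases fin2 a with rfl | rfl <;> rcases fin2 b with rfl | rfl <;>
          rcases fin2 x with rfl | rfl <;> rcases fin2 y with rfl | rfl
        all_goals first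
          | (rw [if_pos (by decide)]; linarith [hsum 0 0, hsum 0 1, hsum 1 0, hsum 1 1, hA0 1 0 0, hA0 1 0 1, hA1 1 0 0, hA1 1 0 1, hB0 0 1 0, hB0 1 1 0, hB1 0 1 0, hB1 1 1 0])
          | (rw [if_neg (by decide)]; linarith [hsum 0 0, hsum 0 1, hsum 1 0, hsum 1 1, hA0 1 0 0, hA0 1 0 1, hA1 1 0 0, hA1 1 0 1, hB0 0 1 0, hB0 1 1 0, hB1 0 1 0, hB1 1 1 0])
      · -- γ=1 δ=0 ε=1
        have z0 := hz' 0 0 0 0 (by decide)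
        have z1 := hz' 0 0 1 0 (by decide)
        have z2 := hz' 0 0 1 1 (by decide)
        have z3 := hz' 0 1 0 1 (by decide)
        have z4 := hz' 1 0 0 1 (by decide)
        have z5 := hz' 1 1 0 0 (by decide)
        have z6 := hz' 1 1 1 0 (by decide)
        have z7 := hz' 1 1 1 1 (by decide)
        funext a b x y
        rcases fin2 a with rfl | rfl <;> rcases fin2 b with rfl | rfl <;>
          rcases fin2 x with rfl | rfl <;> rcases fin2 y with rfl | rfl
        all_goals first
          | (rw [if_pos (by decide)]; linarith [hsum 0 0, hsum 0 1, hsum 1 0, hsum 1 1, hA0 1 0 0, hA0 1 0 1, hA1 1 0 0, hA1 1 0 1, hB0 0 1 0, hB0 1 1 0, hB1 0 1 0, hB1 1 1 0])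
          | (rw [if_neg (by decide)]; linarith [hsum 0 0, hsum 0 1, hsum 1 0, hsum 1 1, hA0 1 0 0, hA0 1 0 1, hA1 1 0 0, hA1 1 0 1, hB0 0 1 0, hB0 1 1 0, hB1 0 1 0, hB1 1 1 0])
      · -- γ=1 δ=1 ε=0
        have z0 := hz' 0 0 0 0 (by decide)
        have z1 := hz' 0 1 0 1 (by decide)
        have z2 := hz' 0 1 1 0 (by decide)
        have z3 := hz' 0 1 1 1 (by decide)
        have z4 := hz' 1 0 0 1 (by decide)
        have z5 := hz' 1 0 1 0 (by decide)
        have z6 := hz' 1 0 1 1 (by decide)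
        have z7 := hz' 1 1 0 0 (by decide)
        funext a b x y
        rcases fin2 a with rfl | rfl <;> rcases fin2 b with rfl | rfl <;>
          rcases fin2 x with rfl | rfl <;> rcases fin2 y with rfl | rfl
        all_goals first
          | (rw [if_pos (by decide)]; linarith [hsum 0 0, hsum 0 1, hsum 1 0, hsum 1 1, hA0 1 0 0, hA0 1 0 1, hA1 1 0 0, hA1 1 0 1, hB0 0 1 0, hB0 1 1 0, hB1 0 1 0, hB1 1 1 0])
          | (rw [if_neg (by decide)]; linarith [hsum 0 0, hsum 0 1, hsum 1 0, hsum 1 1, hA0 1 0 0, hA0 1 0 1, hA1 1 0 0, hA1 1 0 1, hB0 0 1 0, hB0 1 1 0, hB1 0 1 0, hB1 1 1 0])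
      · -- γ=1 δ=1 ε=1
        have z0 := hz' 0 0 0 1 (by decide)
        have z1 := hz' 0 0 1 0 (by decide)
        have z2 := hz' 0 0 1 1 (by decide)
        have z3 := hz' 0 1 0 0 (by decide)
        have z4 := hz' 1 0 0 0 (by decide)
        have z5 := hz' 1 1 0 1 (by decide)
        have z6 := hz' 1 1 1 0 (by decide)
        have z7 := hz' 1 1 1 1 (by decide)
        funext a b x y
        rcases fin2 a with rfl | rfl <;> rcases fin2 b with rfl | rfl <;>
          rcases fin2 x with rfl | rfl <;> rcases fin2 y with rfl | rfl
        all_goals first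
          | (rw [if_pos (by decide)]; linarith [hsum 0 0, hsum 0 1, hsum 1 0, hsum 1 1, hA0 1 0 0, hA0 1 0 1, hA1 1 0 0, hA1 1 0 1, hB0 0 1 0, hB0 1 1 0, hB1 0 1 0, hB1 1 1 0])
          | (rw [if_neg (by decide)]; linarith [hsum 0 0, hsum 0 1, hsum 1 0, hsum 1 1, hA0 1 0 0, hA0 1 0 1, hA1 1 0 0, hA1 1 0 1, hB0 0 1 0, hB0 1 1 0, hB1 0 1 0, hB1 1 1 0])
    exact ⟨main q hq (fun a b x y h => (hzero a b x y h).1),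
      main r hr (fun a b x y h => (hzero a b x y h).2)⟩


noncomputable def detFun : Fin 2 × Fin 2 × Fin 2 × Fin 2 → Beh := fun t a b x y =>
  if a = t.2.2.1 * y + t.1 ∧ b = t.2.2.2 * x + t.2.1 then (1 : ℝ) else 0

noncomputable def prFun : Fin 2 × Fin 2 × Fin 2 → Beh := fun t a b x y =>
  if a + b = (x + t.1) * (y + t.2.1) + t.2.2 then (1 : ℝ) / 2 else 0

lemma DetSet_eq : DetSet = Set.range detFun := by
  ext p
  constructor
  · rintro ⟨α, β, μ, ν, rfl⟩; exact ⟨(α, β, μ, ν), rfl⟩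
  · rintro ⟨⟨α, β, μ, ν⟩, rfl⟩; exact ⟨α, β, μ, ν, rfl⟩

lemma PRSet_eq : PRSet = Set.range prFun := by
  ext p
  constructor
  · rintro ⟨γ, δ, ε, rfl⟩; exact ⟨(γ, δ, ε), rfl⟩
  · rintro ⟨⟨γ, δ, ε⟩, rfl⟩; exact ⟨γ, δ, ε, rfl⟩

lemma detFun_inj : Function.Injective detFun := by
  rintro ⟨α, β, μ, ν⟩ ⟨α', β', μ', ν'⟩ h
  have key : ∀ x y : Fin 2, μ * y + α = μ' * y + α' ∧ ν * x + β = ν' * x + β' := by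
    intro x y
    have h1 := congrFun (congrFun (congrFun (congrFun h (μ * y + α)) (ν * x + β)) x) y
    simp only [detFun] at h1
    rw [if_pos (by simp)] at h1
    by_cases hc : μ * y + α = μ' * y + α' ∧ ν * x + β = ν' * x + β'
    · exact hc
    · rw [if_neg hc] at h1; norm_num at h1
  have h00 := key 0 0
  have h11 := key 1 1
  have e1 : α = α' := by have := h00.1; simpa using this
  have e2 : β = β' := by have := h00.2; simpa using this
  have e3 : μ = μ' := by
    have := h11.1; rw [mul_one, mul_one, e1] at this; exact add_right_cancel this
  have e4 : ν = ν' := by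
    have := h11.2; rw [mul_one, mul_one, e2] at this; exact add_right_cancel this
  simp [e1, e2, e3, e4]

lemma prFun_inj : Function.Injective prFun := by
  rintro ⟨γ, δ, ε⟩ ⟨γ', δ', ε'⟩ h
  have key : ∀ x y : Fin 2, (x + γ) * (y + δ) + ε = (x + γ') * (y + δ') + ε' := by
    intro x y
    have h1 := congrFun (congrFun (congrFun (congrFun h
      ((x + γ) * (y + δ) + ε)) 0) x) y
    simp only [prFun] at h1
    rw [if_pos (by simp)] at h1
    by_cases hc : (x + γ) * (y + δ) + ε + 0 = (x + γ') * (y + δ') + ε'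
    · simpa using hc
    · rw [if_neg hc] at h1; norm_num at h1
  revert key
  rcases fin2 γ with rfl | rfl <;> rcases fin2 δ with rfl | rfl <;>
    rcases fin2 ε with rfl | rfl <;>
    rcases fin2 γ' with rfl | rfl <;> rcases fin2 δ' with rfl | rfl <;>
    rcases fin2 ε' with rfl | rfl <;> intro key <;>
    first
      | rfl
      | (exfalso
         have k1 := key 0 0
         have k2 := key 0 1
         have k3 := key 1 0
         have k4 := key 1 1
         revert k1 k2 k3 k4
         decide)

lemma det_pr_disjoint : Disjoint DetSet PRSet := by
  rw [Set.disjoint_left]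
  rintro p ⟨α, β, μ, ν, rfl⟩ ⟨γ, δ, ε, hpr⟩
  have h1 := congrFun (congrFun (congrFun (congrFun hpr α) β) 0) 0
  rw [if_pos (by constructor <;> simp)] at h1
  split_ifs at h1 <;> norm_num at h1

lemma ncard_union : (DetSet ∪ PRSet).ncard = 24 := by
  have hd : DetSet.ncard = 16 := by
    rw [DetSet_eq, ← Set.image_univ, Set.ncard_image_of_injective _ detFun_inj,
      Set.ncard_univ]
    simp [Nat.card_eq_fintype_card]
  have hp : PRSet.ncard = 8 := by
    rw [PRSet_eq, ← Set.image_univ, Set.ncard_image_of_injective _ prFun_inj,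
      Set.ncard_univ]
    simp [Nat.card_eq_fintype_card]
  rw [Set.ncard_union_eq det_pr_disjoint (DetSet_eq ▸ (Set.finite_range _))
    (PRSet_eq ▸ (Set.finite_range _)), hd, hp]


/-- The extreme points of the binary NBTS polytope are exactly the
16 deterministic behaviours and the 8 PR-type behaviours (24 points in total).
(Here `Fin 2` arithmetic is mod 2.) -/
theorem extremePoints_binary_nbts_polytope :
    ({p : Fin 2 → Fin 2 → Fin 2 → Fin 2 → ℝ |
        (∀ a b x y, 0 ≤ p a b x y) ∧
        (∀ x y, ∑ a, ∑ b, p a b x y = 1) ∧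
        (∀ a x x' y, ∑ b, p a b x y = ∑ b, p a b x' y) ∧
        (∀ b x y y', ∑ a, p a b x y = ∑ a, p a b x y')}.extremePoints ℝ
      =
      {p : Fin 2 → Fin 2 → Fin 2 → Fin 2 → ℝ |
        ∃ α β μ ν : Fin 2, p = fun a b x y =>
          if a = μ * y + α ∧ b = ν * x + β then (1 : ℝ) else 0} ∪
      {p : Fin 2 → Fin 2 → Fin 2 → Fin 2 → ℝ |
        ∃ γ δ ε : Fin 2, p = fun a b x y =>
          if a + b = (x + γ) * (y + δ) + ε then (1 : ℝ) / 2 else 0})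
    ∧
    ({p : Fin 2 → Fin 2 → Fin 2 → Fin 2 → ℝ |
        ∃ α β μ ν : Fin 2, p = fun a b x y =>
          if a = μ * y + α ∧ b = ν * x + β then (1 : ℝ) else 0} ∪
      {p : Fin 2 → Fin 2 → Fin 2 → Fin 2 → ℝ |
        ∃ γ δ ε : Fin 2, p = fun a b x y =>
          if a + b = (x + γ) * (y + δ) + ε then (1 : ℝ) / 2 else 0}).ncard = 24 := by
  constructor
  · show Sset.extremePoints ℝ = DetSet ∪ PRSet
    apply Set.Subset.antisymm forward
    rintro p (⟨α, β, μ, ν, rfl⟩ | ⟨γ, δ, ε, rfl⟩)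
    · exact det_extreme α β μ ν
    · exact pr_extreme γ δ ε
  · exact ncard_union
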